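/- arXiv:1105.0728 — 5 statements merged into one kernel-verified Lean document; each statement's English description precedes it below -/
import Mathlib

section
/- Let c ∈ ℝ^p and let z be the Euclidean projection of the componentwise absolute value |c| onto the ℓ₁-ball of radius η. Then the vector y* with components y*_i = sign(c_i) z_i is the Euclidean projection of c onto the ℓ₁-ball of radius η. -/
private lemma abs_sign_le (x : ℝ) : |Real.sign x| ≤ 1 := by
  rcases Real.sign_apply_eq x with h | h | h <;> rw [h] <;> norm_num

private lemma normsq_le (p : ℕ) (a b : EuclideanSpace ℝ (Fin p))
    (h : ∀ i, (a i) ^ 2 ≤ (b i) ^ 2) : ‖a‖ ≤ ‖b‖ := by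
  rw [EuclideanSpace.norm_eq, EuclideanSpace.norm_eq]
  apply Real.sqrt_le_sqrt
  apply Finset.sum_le_sum
  intro i _
  simpa [sq_abs] using h i

/-- If `z` is the Euclidean projection of the componentwise absolute value `|c|`
onto the ℓ₁-ball of radius `η` (with nonnegative entries), then the vector
`y*` with `y*_i = sign(c_i) z_i` is the Euclidean projection of `c` onto the
ℓ₁-ball of radius `η`. -/
theorem stmt4 (p : ℕ) (c : EuclideanSpace ℝ (Fin p)) (η : ℝ) (hη : 0 ≤ η)
    (z : EuclideanSpace ℝ (Fin p)) (hznn : ∀ i, 0 ≤ z i)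
    (hzmem : ∑ i, |z i| ≤ η)
    (hzproj : ∀ w : EuclideanSpace ℝ (Fin p), (∑ i, |w i|) ≤ η →
      ‖(show EuclideanSpace ℝ (Fin p) from WithLp.toLp 2 fun i => |c i|) - z‖ ≤
      ‖(show EuclideanSpace ℝ (Fin p) from WithLp.toLp 2 fun i => |c i|) - w‖) :
    let ystar : EuclideanSpace ℝ (Fin p) := WithLp.toLp 2 fun i => Real.sign (c i) * z i
    (∑ i, |ystar i| ≤ η) ∧
      ∀ w : EuclideanSpace ℝ (Fin p), (∑ i, |w i|) ≤ η → ‖c - ystar‖ ≤ ‖c - w‖ := by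
  intro ystar
  constructor
  · calc ∑ i, |ystar i| ≤ ∑ i, |z i| := by
          apply Finset.sum_le_sum
          intro i _
          show |Real.sign (c i) * z i| ≤ |z i|
          rw [abs_mul]
          calc |Real.sign (c i)| * |z i| ≤ 1 * |z i| :=
                mul_le_mul_of_nonneg_right (abs_sign_le _) (abs_nonneg _)
            _ = |z i| := one_mul _
      _ ≤ η := hzmem
  · intro w hw
    set ca : EuclideanSpace ℝ (Fin p) := WithLp.toLp 2 fun i => |c i| with hca
    set wa : EuclideanSpace ℝ (Fin p) := WithLp.toLp 2 fun i => |w i| with hwa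
    have hwmem : ∑ i, |wa i| ≤ η := by
      calc ∑ i, |wa i| = ∑ i, |w i| := by
            apply Finset.sum_congr rfl; intro i _; exact abs_abs _
        _ ≤ η := hw
    have h1 : ‖c - ystar‖ ≤ ‖ca - z‖ := by
      apply normsq_le
      intro i
      have hsub : (c - ystar) i = c i - Real.sign (c i) * z i := rfl
      have hsub2 : (ca - z) i = |c i| - z i := rfl
      rw [hsub, hsub2]
      rcases lt_trichotomy (c i) 0 with h | h | h
      · rw [Real.sign_of_neg h, abs_of_neg h]; ring_nf
        exact le_rfl
      · rw [h, Real.sign_zero, abs_zero]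
        simp
        positivity
      · rw [Real.sign_of_pos h, abs_of_pos h]; ring_nf; exact le_rfl
    have h2 : ‖ca - z‖ ≤ ‖ca - wa‖ := hzproj wa hwmem
    have h3 : ‖ca - wa‖ ≤ ‖c - w‖ := by
      apply normsq_le
      intro i
      have hsub : (ca - wa) i = |c i| - |w i| := rfl
      have hsub2 : (c - w) i = c i - w i := rfl
      rw [hsub, hsub2]
      calc (|c i| - |w i|) ^ 2 = |(|c i| - |w i|)| ^ 2 := (sq_abs _).symm
        _ ≤ |(c i - w i)| ^ 2 := by
            apply pow_le_pow_left₀ (abs_nonneg _) (abs_abs_sub_abs_le_abs_sub _ _)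
        _ = (c i - w i) ^ 2 := sq_abs _
    exact le_trans h1 (le_trans h2 h3)
end

section
/- Let f: ℝ^m × ℝ^M → ℝ be convex and differentiable in y with ∇_y f Lipschitz in y, let g: ℝ^M → ℝ be convex, F(x,y) = f(x,y) + g(y), and for ρ > 0 define L_ρ(x,y,ȳ) = f(x,y) + ∇_y f(x,y)^T(ȳ - y) + (1/(2ρ))‖ȳ - y‖² + g(ȳ). Suppose q = argmin_ȳ L_ρ(x,y,ȳ) satisfies F(x,q) ≤ L_ρ(x,y,q). Then for all (x̄, ȳ): 2ρ(F(x̄,ȳ) - F(x,q)) ≥ ‖q - ȳ‖² - ‖y - ȳ‖² + 2ρ(x̄ - x)^T ∇_x f(x,y). -/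
open RealInnerProductSpace

lemma myLineDeriv {n : ℕ} {φ : EuclideanSpace ℝ (Fin n) → ℝ}
    {G p : EuclideanSpace ℝ (Fin n)} (v : EuclideanSpace ℝ (Fin n))
    (h : HasGradientAt φ G p) :
    HasDerivAt (fun t : ℝ => φ (p + t • v)) ⟪G, v⟫ 0 := by
  have hc : HasDerivAt (fun t : ℝ => p + t • v) v 0 := by
    simpa using ((hasDerivAt_id (0:ℝ)).smul_const v).const_add p
  have h' : HasFDerivAt φ (InnerProductSpace.toDual ℝ _ G) (p + (0:ℝ) • v) := by
    simpa using h.hasFDerivAt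
  have := h'.comp_hasDerivAt 0 hc
  simpa [InnerProductSpace.toDual_apply_apply, Function.comp_def] using this

lemma mySlopeTendsto {n : ℕ} {φ : EuclideanSpace ℝ (Fin n) → ℝ}
    {G p : EuclideanSpace ℝ (Fin n)} (v : EuclideanSpace ℝ (Fin n))
    (h : HasGradientAt φ G p) :
    Filter.Tendsto (fun t : ℝ => (φ (p + t • v) - φ p) / t) (nhdsWithin 0 {0}ᶜ)
      (nhds ⟪G, v⟫) := by
  have := hasDerivAt_iff_tendsto_slope.mp (myLineDeriv v h)
  have e : slope (fun t : ℝ => φ (p + t • v)) 0 = fun t : ℝ => (φ (p + t • v) - φ p) / t := by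
    funext t
    simp [slope_def_field]
  rwa [e] at this

set_option maxHeartbeats 1000000 in
/-- Joint first-order inequality. -/
lemma myFirstOrder {m M : ℕ}
    {f : EuclideanSpace ℝ (Fin m) → EuclideanSpace ℝ (Fin M) → ℝ}
    {gx : EuclideanSpace ℝ (Fin m)} {gy : EuclideanSpace ℝ (Fin M)}
    (hf : ConvexOn ℝ Set.univ (fun q : EuclideanSpace ℝ (Fin m) × EuclideanSpace ℝ (Fin M) => f q.1 q.2))
    {x : EuclideanSpace ℝ (Fin m)} {y : EuclideanSpace ℝ (Fin M)}
    (hgx : HasGradientAt (fun x' => f x' y) gx x)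
    (hgy : HasGradientAt (fun y' => f x y') gy y)
    (xb : EuclideanSpace ℝ (Fin m)) (yb : EuclideanSpace ℝ (Fin M)) :
    f x y + ⟪gx, xb - x⟫ + ⟪gy, yb - y⟫ ≤ f xb yb := by
  set u := xb - x with hu
  set v := yb - y with hv
  set s₁ : ℝ → ℝ := fun t => (f x (y + t • v) - f x y) / t with hs₁
  set s₂ : ℝ → ℝ := fun t => (f (x + t • u) y - f x y) / t with hs₂
  have hts₁ : Filter.Tendsto s₁ (nhdsWithin 0 {0}ᶜ) (nhds ⟪gy, v⟫) := mySlopeTendsto v hgy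
  have hts₂ : Filter.Tendsto s₂ (nhdsWithin 0 {0}ᶜ) (nhds ⟪gx, u⟫) := mySlopeTendsto u hgx
  -- maps from right-neighborhood
  have hmono : nhdsWithin (0:ℝ) (Set.Ioi 0) ≤ nhdsWithin 0 {0}ᶜ :=
    nhdsWithin_mono 0 (fun t ht => ne_of_gt ht)
  have h2t : Filter.Tendsto (fun t : ℝ => 2 * t) (nhdsWithin 0 (Set.Ioi 0)) (nhdsWithin 0 {0}ᶜ) := by
    apply Filter.Tendsto.mono_right _ hmono
    rw [tendsto_nhdsWithin_iff]
    constructor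
    · have : Filter.Tendsto (fun t : ℝ => 2 * t) (nhds 0) (nhds 0) := by
        simpa using (continuous_mul_left (2:ℝ)).tendsto (0:ℝ)
      exact this.mono_left nhdsWithin_le_nhds
    · filter_upwards [self_mem_nhdsWithin] with t ht
      exact mul_pos two_pos (Set.mem_Ioi.mp ht)
  have hn2t : Filter.Tendsto (fun t : ℝ => -2 * t) (nhdsWithin 0 (Set.Ioi 0)) (nhdsWithin 0 {0}ᶜ) := by
    rw [tendsto_nhdsWithin_iff]
    constructor
    · have h0 : Filter.Tendsto (fun t : ℝ => -2 * t) (nhds 0) (nhds (-2 * 0)) :=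
        ((continuous_const.mul continuous_id).tendsto (0:ℝ))
      rw [show (-2:ℝ) * 0 = 0 by ring] at h0
      exact h0.mono_left nhdsWithin_le_nhds
    · filter_upwards [self_mem_nhdsWithin] with t ht
      simp only [Set.mem_compl_iff, Set.mem_singleton_iff]
      intro h
      nlinarith [Set.mem_Ioi.mp ht]
  have hcomb : Filter.Tendsto (fun t : ℝ => 2 * s₁ t - s₁ (2 * t) + s₂ (-2 * t))
      (nhdsWithin 0 (Set.Ioi 0)) (nhds (2 * ⟪gy, v⟫ - ⟪gy, v⟫ + ⟪gx, u⟫)) := by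
    exact (((hts₁.mono_left hmono).const_mul 2).sub (hts₁.comp h2t)).add (hts₂.comp hn2t)
  have hbound : ∀ᶠ t in nhdsWithin (0:ℝ) (Set.Ioi 0),
      2 * s₁ t - s₁ (2 * t) + s₂ (-2 * t) ≤ f xb yb - f x y := by
    filter_upwards [Ioo_mem_nhdsGT_of_mem (by norm_num : (0:ℝ) ∈ Set.Ico 0 1)] with t ht
    obtain ⟨ht0, ht1⟩ := ht
    have htne : t ≠ 0 := ne_of_gt ht0
    -- convexity slope bound
    have ha : f (x + t • u) (y + t • v) ≤ (1 - t) * f x y + t * f xb yb := by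
      have := hf.2 (Set.mem_univ ((x, y) : _ × _)) (Set.mem_univ ((xb, yb) : _ × _))
        (by linarith : (0:ℝ) ≤ 1 - t) (le_of_lt ht0) (by ring)
      simp only [Prod.smul_mk, Prod.mk_add_mk, smul_eq_mul] at this
      have e1 : (1 - t) • x + t • xb = x + t • u := by rw [hu]; module
      have e2 : (1 - t) • y + t • yb = y + t • v := by rw [hv]; module
      rw [e1, e2] at this
      exact this
    -- midpoint in x
    have hb : 2 * f x (y + t • v) ≤ f (x + t • u) (y + t • v) + f (x + (-t) • u) (y + t • v) := by
      have := hf.2 (Set.mem_univ ((x + t • u, y + t • v) : _ × _))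
        (Set.mem_univ ((x + (-t) • u, y + t • v) : _ × _))
        (by norm_num : (0:ℝ) ≤ 1/2) (by norm_num : (0:ℝ) ≤ 1/2) (by norm_num)
      simp only [Prod.smul_mk, Prod.mk_add_mk, smul_eq_mul] at this
      have e1 : (1/2 : ℝ) • (x + t • u) + (1/2 : ℝ) • (x + (-t) • u) = x := by module
      have e2 : (1/2 : ℝ) • (y + t • v) + (1/2 : ℝ) • (y + t • v) = y + t • v := by module
      rw [e1, e2] at this
      linarith
    -- midpoint splitting the cross point
    have hc : 2 * f (x + (-t) • u) (y + t • v) ≤ f (x + (-2*t) • u) y + f x (y + (2*t) • v) := by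
      have := hf.2 (Set.mem_univ ((x + (-2*t) • u, y) : _ × _))
        (Set.mem_univ ((x, y + (2*t) • v) : _ × _))
        (by norm_num : (0:ℝ) ≤ 1/2) (by norm_num : (0:ℝ) ≤ 1/2) (by norm_num)
      simp only [Prod.smul_mk, Prod.mk_add_mk, smul_eq_mul] at this
      have e1 : (1/2 : ℝ) • (x + (-2*t) • u) + (1/2 : ℝ) • x = x + (-t) • u := by module
      have e2 : (1/2 : ℝ) • y + (1/2 : ℝ) • (y + (2*t) • v) = y + t • v := by module
      rw [e1, e2] at this
      linarith
    -- express function values via slopes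
    have e1 : f x (y + t • v) = f x y + t * s₁ t := by
      rw [hs₁]; field_simp; ring
    have e2 : f x (y + (2*t) • v) = f x y + (2*t) * s₁ (2*t) := by
      rw [hs₁]; field_simp; ring
    have e3 : f (x + (-2*t) • u) y = f x y + (-2*t) * s₂ (-2*t) := by
      rw [hs₂]; field_simp; ring
    rw [e1] at hb
    rw [e2, e3] at hc
    -- combine: t * (2 s₁ t - s₁(2t) + s₂(-2t)) ≤ t * (f xb yb - f x y)
    have key : t * (2 * s₁ t - s₁ (2*t) + s₂ (-2*t)) ≤ t * (f xb yb - f x y) := by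
      nlinarith [ha, hb, hc]
    have := (mul_le_mul_iff_right₀ ht0).mp key
    linarith
  have hfin := le_of_tendsto hcomb hbound
  have : ⟪gy, v⟫ + ⟪gx, u⟫ ≤ f xb yb - f x y := by linarith
  linarith

set_option maxHeartbeats 1000000 in
/-- Strong convexity of the prox objective: minimizer inequality with quadratic gap. -/
lemma myProxIneq {M : ℕ} {g : EuclideanSpace ℝ (Fin M) → ℝ}
    (hg : ConvexOn ℝ Set.univ g)
    {G y q : EuclideanSpace ℝ (Fin M)} {ρ : ℝ} (hρ : 0 < ρ)
    (hq : ∀ w, ⟪G, q - y⟫ + (1 / (2 * ρ)) * ‖q - y‖ ^ 2 + g q ≤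
              ⟪G, w - y⟫ + (1 / (2 * ρ)) * ‖w - y‖ ^ 2 + g w)
    (yb : EuclideanSpace ℝ (Fin M)) :
    ⟪G, q - y⟫ + (1 / (2 * ρ)) * ‖q - y‖ ^ 2 + g q + (1 / (2 * ρ)) * ‖yb - q‖ ^ 2 ≤
      ⟪G, yb - y⟫ + (1 / (2 * ρ)) * ‖yb - y‖ ^ 2 + g yb := by
  set ψq := ⟪G, q - y⟫ + (1 / (2 * ρ)) * ‖q - y‖ ^ 2 + g q with hψq
  set ψb := ⟪G, yb - y⟫ + (1 / (2 * ρ)) * ‖yb - y‖ ^ 2 + g yb with hψb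
  set C := ‖yb - q‖ ^ 2 with hC
  have hP : ∀ t : ℝ, t ∈ Set.Ioo (0:ℝ) 1 → ψq + ((1 - t) / (2 * ρ)) * C ≤ ψb := by
    intro t ⟨ht0, ht1⟩
    set w := q + t • (yb - q) with hw
    have hcw : w = (1 - t) • q + t • yb := by rw [hw]; module
    -- convexity of g
    have hgw : g w ≤ (1 - t) * g q + t * g yb := by
      have := hg.2 (Set.mem_univ q) (Set.mem_univ yb)
        (by linarith : (0:ℝ) ≤ 1 - t) (le_of_lt ht0) (by ring)
      rw [← hcw] at this
      simpa using this
    -- linear part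
    have hlin : ⟪G, w - y⟫ = ⟪G, q - y⟫ + t * ⟪G, yb - q⟫ := by
      have : w - y = (q - y) + t • (yb - q) := by rw [hw]; module
      rw [this, inner_add_right, real_inner_smul_right]
    -- quadratic part
    have hnw : ‖w - y‖ ^ 2 = ‖q - y‖ ^ 2 + 2 * t * ⟪q - y, yb - q⟫ + t ^ 2 * ‖yb - q‖ ^ 2 := by
      have e : w - y = (q - y) + t • (yb - q) := by rw [hw]; module
      rw [e, norm_add_sq_real, real_inner_smul_right, norm_smul]
      simp only [Real.norm_eq_abs, mul_pow, sq_abs]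
      ring
    have hnb : ‖yb - y‖ ^ 2 = ‖q - y‖ ^ 2 + 2 * ⟪q - y, yb - q⟫ + ‖yb - q‖ ^ 2 := by
      have e : yb - y = (q - y) + (yb - q) := by module
      rw [e, norm_add_sq_real]
    have hlin2 : ⟪G, yb - y⟫ = ⟪G, q - y⟫ + ⟪G, yb - q⟫ := by
      have e : yb - y = (q - y) + (yb - q) := by module
      rw [e, inner_add_right]
    have hmin := hq w
    have hiρ : 0 < 1 / (2 * ρ) := by positivity
    -- combine: ψq ≤ ψ(w) ≤ (1-t)ψq + tψb - (t(1-t)/(2ρ)) C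
    have hcomb : ψq ≤ (1 - t) * ψq + t * ψb - (t * (1 - t)) * ((1 / (2 * ρ)) * C) := by
      rw [hψq, hψb, hC]
      calc ⟪G, q - y⟫ + (1 / (2 * ρ)) * ‖q - y‖ ^ 2 + g q
          ≤ ⟪G, w - y⟫ + (1 / (2 * ρ)) * ‖w - y‖ ^ 2 + g w := hmin
        _ ≤ _ := by
            rw [hlin, hnw, hnb, hlin2]
            nlinarith [hgw, hiρ, sq_nonneg t]
    -- divide by t
    have ht' : t * (ψq + ((1 - t) / (2 * ρ)) * C) ≤ t * ψb := by
      have : t * ((1 - t) / (2 * ρ)) * C = (t * (1 - t)) * ((1 / (2 * ρ)) * C) := by ring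
      nlinarith [hcomb]
    exact (mul_le_mul_iff_right₀ ht0).mp ht'
  have htend : Filter.Tendsto (fun t : ℝ => ψq + ((1 - t) / (2 * ρ)) * C)
      (nhdsWithin 0 (Set.Ioi 0)) (nhds (ψq + ((1 - 0) / (2 * ρ)) * C)) := by
    apply Filter.Tendsto.mono_left _ nhdsWithin_le_nhds
    exact (Continuous.tendsto (by continuity) 0)
  have := le_of_tendsto htend (by
    filter_upwards [Ioo_mem_nhdsGT_of_mem (by norm_num : (0:ℝ) ∈ Set.Ico 0 1)] with t ht
    exact hP t ht)
  have e : ψq + ((1 - 0) / (2 * ρ)) * C = ψq + (1 / (2 * ρ)) * C := by norm_num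
  rw [e] at this
  linarith

set_option maxHeartbeats 1000000 in
/-- First part of the descent lemma (Lemma 3.1) for partial linearization:
if `q` minimizes the partial linearization `L_ρ(x,y,·)` and the descent condition
`F(x,q) ≤ L_ρ(x,y,q)` holds, then for all `(x̄,ȳ)`,
`2ρ(F(x̄,ȳ) - F(x,q)) ≥ ‖q - ȳ‖² - ‖y - ȳ‖² + 2ρ⟪x̄ - x, ∇ₓf(x,y)⟫`. -/
theorem stmt6 (m M : ℕ)
    (f : EuclideanSpace ℝ (Fin m) → EuclideanSpace ℝ (Fin M) → ℝ)
    (g : EuclideanSpace ℝ (Fin M) → ℝ)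
    (gx : EuclideanSpace ℝ (Fin m) → EuclideanSpace ℝ (Fin M) → EuclideanSpace ℝ (Fin m))
    (gy : EuclideanSpace ℝ (Fin m) → EuclideanSpace ℝ (Fin M) → EuclideanSpace ℝ (Fin M))
    (hf : ConvexOn ℝ Set.univ (fun q : EuclideanSpace ℝ (Fin m) × EuclideanSpace ℝ (Fin M) => f q.1 q.2))
    (hg : ConvexOn ℝ Set.univ g)
    (hgx : ∀ x y, HasGradientAt (fun x' => f x' y) (gx x y) x)
    (hgy : ∀ x y, HasGradientAt (fun y' => f x y') (gy x y) y)
    (L : ℝ) (hL : 0 < L)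
    (hLip : ∀ x y z, ‖gy x y - gy x z‖ ≤ L * ‖y - z‖)
    (ρ : ℝ) (hρ : 0 < ρ)
    (x : EuclideanSpace ℝ (Fin m)) (y q : EuclideanSpace ℝ (Fin M))
    (hq : ∀ w, f x y + ⟪gy x y, q - y⟫ + (1 / (2 * ρ)) * ‖q - y‖ ^ 2 + g q ≤
              f x y + ⟪gy x y, w - y⟫ + (1 / (2 * ρ)) * ‖w - y‖ ^ 2 + g w)
    (hdesc : f x q + g q ≤
      f x y + ⟪gy x y, q - y⟫ + (1 / (2 * ρ)) * ‖q - y‖ ^ 2 + g q) :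
    ∀ (xb : EuclideanSpace ℝ (Fin m)) (yb : EuclideanSpace ℝ (Fin M)),
      2 * ρ * ((f xb yb + g yb) - (f x q + g q)) ≥
        ‖q - yb‖ ^ 2 - ‖y - yb‖ ^ 2 + 2 * ρ * ⟪xb - x, gx x y⟫ := by
  intro xb yb
  have key1 : f x y + ⟪gx x y, xb - x⟫ + ⟪gy x y, yb - y⟫ ≤ f xb yb :=
    myFirstOrder hf (hgx x y) (hgy x y) xb yb
  have hq' : ∀ w, ⟪gy x y, q - y⟫ + (1 / (2 * ρ)) * ‖q - y‖ ^ 2 + g q ≤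
      ⟪gy x y, w - y⟫ + (1 / (2 * ρ)) * ‖w - y‖ ^ 2 + g w := by
    intro w
    have := hq w
    linarith
  have key2 := myProxIneq hg hρ hq' yb
  have hcomm : ⟪xb - x, gx x y⟫ = ⟪gx x y, xb - x⟫ := real_inner_comm _ _
  have hn1 : ‖yb - y‖ = ‖y - yb‖ := norm_sub_rev _ _
  have hn2 : ‖yb - q‖ = ‖q - yb‖ := norm_sub_rev _ _
  -- big inequality before multiplying by 2ρ
  have big : f x q + g q ≤ f xb yb + g yb - ⟪gx x y, xb - x⟫
      + (1 / (2 * ρ)) * (‖y - yb‖ ^ 2 - ‖q - yb‖ ^ 2) := by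
    rw [← hn1, ← hn2]
    linarith [hdesc, key2, key1]
  have hmul := mul_le_mul_of_nonneg_left big (by positivity : (0:ℝ) ≤ 2 * ρ)
  have hcancel : (2 * ρ) * ((1 / (2 * ρ)) * (‖y - yb‖ ^ 2 - ‖q - yb‖ ^ 2))
      = ‖y - yb‖ ^ 2 - ‖q - yb‖ ^ 2 := by
    field_simp
  rw [ge_iff_le]
  nlinarith [hmul, hcancel, hcomm]
end

section
/- Let f(x,y) be convex with ∇_y f Lipschitz in y with constant L, g convex, F = f + g, and 0 < ρ ≤ 1/L. Consider the iteration: x^{k+1} = argmin_x f(x, ȳ^k); ȳ^{k+1} = argmin_y [ ∇_y f(x^{k+1}, ȳ^k)^T y + (1/(2ρ))‖y - ȳ^k‖² + g(y) ] (ISTA with partial linearization). Then for every k ≥ 1, F(x^k, ȳ^k) - F(x*, y*) ≤ ‖ȳ^0 - y*‖² / (2ρk), where (x*, y*) minimizes F. -/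
open RealInnerProductSpace Filter Topology Set

section aux

variable {E : Type*} [NormedAddCommGroup E] [NormedSpace ℝ E]

/-- Gradient inequality for a convex differentiable function. -/
lemma convex_fderiv_ineq {φ : E → ℝ} (hφ : ConvexOn ℝ Set.univ φ)
    {x0 : E} {D : E →L[ℝ] ℝ} (hD : HasFDerivAt φ D x0) (y : E) :
    φ x0 + D (y - x0) ≤ φ y := by
  set d := y - x0 with hd
  have hline : HasDerivAt (fun t : ℝ => x0 + t • d) d 0 := by
    simpa using ((hasDerivAt_id (0:ℝ)).smul_const d).const_add x0
  have hh : HasDerivAt (fun t : ℝ => φ (x0 + t • d)) (D d) 0 := by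
    have hD' : HasFDerivAt φ D (x0 + (0:ℝ) • d) := by simpa using hD
    simpa [Function.comp_def] using hD'.comp_hasDerivAt 0 hline
  have hts := hh.tendsto_slope_zero_right
  have hev : ∀ᶠ t in 𝓝[>] (0:ℝ),
      t⁻¹ • (φ (x0 + (0 + t) • d) - φ (x0 + (0:ℝ) • d)) ≤ φ y - φ x0 := by
    filter_upwards [Ioc_mem_nhdsGT (zero_lt_one (α := ℝ))] with t ht
    have ht0 : 0 < t := ht.1
    have ht1 : t ≤ 1 := ht.2
    have hpt : x0 + t • d = (1 - t) • x0 + t • y := by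
      rw [hd]; module
    have hcv : φ ((1 - t) • x0 + t • y) ≤ (1 - t) * φ x0 + t * φ y :=
      hφ.2 (mem_univ x0) (mem_univ y) (by linarith) ht0.le (by ring)
    have : φ (x0 + t • d) - φ x0 ≤ t * (φ y - φ x0) := by
      rw [hpt]; nlinarith
    rw [zero_add, smul_eq_mul]
    simp only [zero_smul, add_zero]
    rw [inv_mul_le_iff₀ ht0]
    nlinarith [this]
  have := le_of_tendsto hts hev
  linarith

variable {F : Type*} [NormedAddCommGroup F] [InnerProductSpace ℝ F] [CompleteSpace F]

/-- Descent lemma for a function with Lipschitz gradient. -/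
lemma descent_lemma {φ : F → ℝ} {G : F → F} (hG : ∀ z, HasGradientAt φ (G z) z)
    {L : ℝ} (hL : 0 ≤ L) (hLip : ∀ y z, ‖G y - G z‖ ≤ L * ‖y - z‖) (xx yy : F) :
    φ yy ≤ φ xx + ⟪G xx, yy - xx⟫ + L / 2 * ‖yy - xx‖ ^ 2 := by
  set d := yy - xx with hd
  set ff : ℝ → ℝ := fun t => φ (xx + t • d) - φ xx - t * ⟪G xx, d⟫ with hff
  have hline : ∀ t : ℝ, HasDerivAt (fun s : ℝ => xx + s • d) d t := by
    intro t
    simpa using ((hasDerivAt_id t).smul_const d).const_add xx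
  have hphi : ∀ t : ℝ, HasDerivAt (fun s : ℝ => φ (xx + s • d)) (⟪G (xx + t • d), d⟫) t := by
    intro t
    have h1 : HasFDerivAt φ (InnerProductSpace.toDual ℝ F (G (xx + t • d))) (xx + t • d) :=
      (hG _).hasFDerivAt
    have := h1.comp_hasDerivAt t (hline t)
    simpa [InnerProductSpace.toDual_apply_apply, Function.comp_def] using this
  have hffd : ∀ t : ℝ, HasDerivAt ff (⟪G (xx + t • d), d⟫ - ⟪G xx, d⟫) t := by
    intro t
    have := ((hphi t).sub_const (φ xx)).sub ((hasDerivAt_id t).mul_const (⟪G xx, d⟫))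
    simpa [hff, Pi.sub_def] using this
  have hB : ∀ t : ℝ, HasDerivAt (fun s : ℝ => L * ‖d‖ ^ 2 / 2 * s ^ 2) (L * ‖d‖ ^ 2 * t) t := by
    intro t
    have := (hasDerivAt_pow 2 t).const_mul (L * ‖d‖ ^ 2 / 2)
    refine this.congr_deriv ?_
    ring
  have hbound : ∀ t ∈ Ico (0:ℝ) 1, ‖⟪G (xx + t • d), d⟫ - ⟪G xx, d⟫‖ ≤ L * ‖d‖ ^ 2 * t := by
    intro t ht
    have h1 : ⟪G (xx + t • d), d⟫ - ⟪G xx, d⟫ = ⟪G (xx + t • d) - G xx, d⟫ := by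
      rw [inner_sub_left]
    rw [h1, Real.norm_eq_abs]
    calc |⟪G (xx + t • d) - G xx, d⟫| ≤ ‖G (xx + t • d) - G xx‖ * ‖d‖ :=
          abs_real_inner_le_norm _ _
      _ ≤ (L * ‖(xx + t • d) - xx‖) * ‖d‖ :=
          mul_le_mul_of_nonneg_right (hLip _ _) (norm_nonneg d)
      _ = L * ‖d‖ ^ 2 * t := by
          rw [add_sub_cancel_left, norm_smul, Real.norm_eq_abs, abs_of_nonneg ht.1]; ring
  have hres := image_norm_le_of_norm_deriv_right_le_deriv_boundary
    (f := ff) (f' := fun t => ⟪G (xx + t • d), d⟫ - ⟪G xx, d⟫) (a := 0) (b := 1)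
    (fun t _ => (hffd t).continuousAt.continuousWithinAt)
    (fun t _ => (hffd t).hasDerivWithinAt)
    (by simp [hff])
    hB
    (fun t ht => hbound t ht)
  have h1 := hres (right_mem_Icc.2 zero_le_one)
  have hf1 : ff 1 = φ yy - φ xx - ⟪G xx, d⟫ := by
    simp [hff, hd]
  rw [hf1] at h1
  have h2 := (abs_le.1 (by simpa [Real.norm_eq_abs] using h1)).2
  linarith

/-- Strong minimality property from the prox-step minimality. -/
lemma strong_prox {g : F → ℝ} (hg : ConvexOn ℝ Set.univ g) {ρ : ℝ} (hρ : 0 < ρ)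
    (c y0 u : F)
    (hmin : ∀ w, ⟪c, u - y0⟫ + (1 / (2 * ρ)) * ‖u - y0‖ ^ 2 + g u ≤
      ⟪c, w - y0⟫ + (1 / (2 * ρ)) * ‖w - y0‖ ^ 2 + g w) (w : F) :
    ⟪c, u - y0⟫ + (1 / (2 * ρ)) * ‖u - y0‖ ^ 2 + g u ≤
      ⟪c, w - y0⟫ + (1 / (2 * ρ)) * ‖w - y0‖ ^ 2 + g w
        - (1 / (2 * ρ)) * ‖w - u‖ ^ 2 := by
  set κ := 1 / (2 * ρ) with hκdef
  have hκ : 0 < κ := by positivity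
  set Qu := ⟪c, u - y0⟫ + κ * ‖u - y0‖ ^ 2 + g u with hQu
  set Qw := ⟪c, w - y0⟫ + κ * ‖w - y0‖ ^ 2 + g w with hQw
  have hstep : ∀ t : ℝ, 0 < t → t ≤ 1 → Qu ≤ Qw - (1 - t) * κ * ‖w - u‖ ^ 2 := by
    intro t ht0 ht1
    set wt := (1 - t) • u + t • w with hwt
    have hin : ⟪c, wt - y0⟫ = (1 - t) * ⟪c, u - y0⟫ + t * ⟪c, w - y0⟫ := by
      have : wt - y0 = (1 - t) • (u - y0) + t • (w - y0) := by rw [hwt]; module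
      rw [this, inner_add_right, real_inner_smul_right, real_inner_smul_right]
    have hnorm : ‖wt - y0‖ ^ 2 =
        (1 - t) * ‖u - y0‖ ^ 2 + t * ‖w - y0‖ ^ 2 - t * (1 - t) * ‖u - w‖ ^ 2 := by
      have ha : wt - y0 = (1 - t) • (u - y0) + t • (w - y0) := by rw [hwt]; module
      set a := u - y0
      set b := w - y0
      have e1 := norm_add_sq_real ((1 - t) • a) (t • b)
      rw [real_inner_smul_left, real_inner_smul_right, norm_smul, norm_smul] at e1
      simp only [Real.norm_eq_abs, mul_pow, sq_abs] at e1
      have e2 := norm_sub_sq_real a b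
      have hab : u - w = a - b := by simp [a, b]
      rw [ha, hab]
      linear_combination e1 + t * (1 - t) * e2
    have hgc : g wt ≤ (1 - t) * g u + t * g w :=
      hg.2 (mem_univ u) (mem_univ w) (by linarith) ht0.le (by ring)
    have hm := hmin wt
    have huw : ‖w - u‖ = ‖u - w‖ := norm_sub_rev _ _
    have huw2 : ‖w - u‖ ^ 2 = ‖u - w‖ ^ 2 := by rw [huw]
    have hQwt : ⟪c, wt - y0⟫ + κ * ‖wt - y0‖ ^ 2 + g wt ≤
        (1 - t) * Qu + t * Qw - κ * (t * (1 - t)) * ‖u - w‖ ^ 2 := by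
      rw [hin, hnorm, hQu, hQw]
      linarith [hgc]
    have h5 : Qu ≤ (1 - t) * Qu + t * Qw - κ * (t * (1 - t)) * ‖u - w‖ ^ 2 :=
      le_trans hm hQwt
    have h3 : t * Qu ≤ t * (Qw - (1 - t) * κ * ‖u - w‖ ^ 2) := by nlinarith [h5]
    have h4 : Qu ≤ Qw - (1 - t) * κ * ‖u - w‖ ^ 2 := (mul_le_mul_iff_right₀ ht0).mp h3
    rw [huw2]
    exact h4
  have htend : Tendsto (fun t : ℝ => Qw - (1 - t) * κ * ‖w - u‖ ^ 2) (𝓝[>] (0:ℝ))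
      (𝓝 (Qw - κ * ‖w - u‖ ^ 2)) := by
    have hc : Continuous (fun t : ℝ => Qw - (1 - t) * κ * ‖w - u‖ ^ 2) :=
      continuous_const.sub
        (((continuous_const.sub continuous_id).mul continuous_const).mul continuous_const)
    have := hc.tendsto 0
    simp only [sub_zero, one_mul] at this
    exact this.mono_left nhdsWithin_le_nhds
  have hev : ∀ᶠ t in 𝓝[>] (0:ℝ), Qu ≤ Qw - (1 - t) * κ * ‖w - u‖ ^ 2 := by
    filter_upwards [Ioc_mem_nhdsGT (zero_lt_one (α := ℝ))] with t ht
    exact hstep t ht.1 ht.2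
  have := ge_of_tendsto htend hev
  linarith

end aux
section aux2

variable {E : Type*} [NormedAddCommGroup E] [NormedSpace ℝ E]
variable {F : Type*} [NormedAddCommGroup F] [InnerProductSpace ℝ F] [CompleteSpace F]

/-- Gradient inequality using joint convexity and vanishing partial gradient in `x`. -/
lemma joint_conv_ineq {f : E → F → ℝ}
    (hf : ConvexOn ℝ Set.univ (fun q : E × F => f q.1 q.2))
    (hfd : Differentiable ℝ (fun q : E × F => f q.1 q.2))
    {x1 : E} {y1 : F} {c : F}
    (hgy : HasGradientAt (fun y' => f x1 y') c y1)
    (hminx : ∀ x', f x1 y1 ≤ f x' y1) (xs : E) (ys : F) :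
    f x1 y1 + ⟪c, ys - y1⟫ ≤ f xs ys := by
  set Φ : E × F → ℝ := fun q => f q.1 q.2 with hΦ
  set D := fderiv ℝ Φ ((x1, y1) : E × F) with hD
  have hDq : HasFDerivAt Φ D ((x1, y1) : E × F) := (hfd _).hasFDerivAt
  have h1 : HasFDerivAt (fun x' : E => f x' y1)
      (D.comp (ContinuousLinearMap.inl ℝ E F)) x1 :=
    by have := hDq.comp x1 (hasFDerivAt_prodMk_left (𝕜 := ℝ) x1 y1); exact this
  have hminx' : IsLocalMin (fun x' : E => f x' y1) x1 :=
    Filter.Eventually.of_forall (fun x' => hminx x')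
  have h1z : D.comp (ContinuousLinearMap.inl ℝ E F) = 0 := by
    rw [← h1.fderiv]; exact hminx'.fderiv_eq_zero
  have h2 : HasFDerivAt (fun y' : F => f x1 y')
      (D.comp (ContinuousLinearMap.inr ℝ E F)) y1 :=
    hDq.comp y1 (hasFDerivAt_prodMk_right x1 y1)
  have h2' : HasFDerivAt (fun y' : F => f x1 y')
      (InnerProductSpace.toDual ℝ F c) y1 := hgy.hasFDerivAt
  have h2eq : D.comp (ContinuousLinearMap.inr ℝ E F)
      = InnerProductSpace.toDual ℝ F c := h2.unique h2'
  have hkey := convex_fderiv_ineq hf hDq ((xs, ys) : E × F)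
  have hsub : ((xs, ys) : E × F) - ((x1, y1) : E × F)
      = (ContinuousLinearMap.inl ℝ E F) (xs - x1)
        + (ContinuousLinearMap.inr ℝ E F) (ys - y1) := by
    simp [ContinuousLinearMap.inl_apply, ContinuousLinearMap.inr_apply,
      Prod.mk_add_mk, Prod.mk_sub_mk, Prod.ext_iff]
  have hDval : D (((xs, ys) : E × F) - ((x1, y1) : E × F)) = ⟪c, ys - y1⟫ := by
    rw [hsub, map_add, ← ContinuousLinearMap.comp_apply, ← ContinuousLinearMap.comp_apply,
      h1z, h2eq]
    simp [InnerProductSpace.toDual_apply_apply]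
  have hq0v : Φ ((x1, y1) : E × F) = f x1 y1 := rfl
  have hq1v : Φ ((xs, ys) : E × F) = f xs ys := rfl
  rw [hDval, hq0v, hq1v] at hkey
  linarith

end aux2
/-- O(1/k) convergence rate of ISTA with partial linearization (Corollary 3.1):
with `x^{k+1} = argmin_x f(x, ȳ^k)` and `ȳ^{k+1}` the prox-linearized update,
`F(x^k, ȳ^k) - F(x*, y*) ≤ ‖ȳ^0 - y*‖² / (2ρk)` for all `k ≥ 1`. -/
theorem stmt8 (m M : ℕ)
    (f : EuclideanSpace ℝ (Fin m) → EuclideanSpace ℝ (Fin M) → ℝ)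
    (g : EuclideanSpace ℝ (Fin M) → ℝ)
    (gy : EuclideanSpace ℝ (Fin m) → EuclideanSpace ℝ (Fin M) → EuclideanSpace ℝ (Fin M))
    (hf : ConvexOn ℝ Set.univ (fun q : EuclideanSpace ℝ (Fin m) × EuclideanSpace ℝ (Fin M) => f q.1 q.2))
    (hfd : Differentiable ℝ (fun q : EuclideanSpace ℝ (Fin m) × EuclideanSpace ℝ (Fin M) => f q.1 q.2))
    (hg : ConvexOn ℝ Set.univ g)
    (hgy : ∀ x y, HasGradientAt (fun y' => f x y') (gy x y) y)
    (L : ℝ) (hL : 0 < L)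
    (hLip : ∀ x y z, ‖gy x y - gy x z‖ ≤ L * ‖y - z‖)
    (ρ : ℝ) (hρ : 0 < ρ) (hρL : ρ ≤ 1 / L)
    (x : ℕ → EuclideanSpace ℝ (Fin m)) (yb : ℕ → EuclideanSpace ℝ (Fin M))
    (hx : ∀ k x', f (x (k + 1)) (yb k) ≤ f x' (yb k))
    (hy : ∀ k w,
      ⟪gy (x (k + 1)) (yb k), yb (k + 1) - yb k⟫
          + (1 / (2 * ρ)) * ‖yb (k + 1) - yb k‖ ^ 2 + g (yb (k + 1)) ≤
        ⟪gy (x (k + 1)) (yb k), w - yb k⟫ + (1 / (2 * ρ)) * ‖w - yb k‖ ^ 2 + g w)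
    (xs : EuclideanSpace ℝ (Fin m)) (ys : EuclideanSpace ℝ (Fin M))
    (hmin : ∀ x' y', f xs ys + g ys ≤ f x' y' + g y') :
    ∀ k : ℕ, 1 ≤ k →
      (f (x k) (yb k) + g (yb k)) - (f xs ys + g ys) ≤
        ‖yb 0 - ys‖ ^ 2 / (2 * ρ * k) := by
  set κ := 1 / (2 * ρ) with hκdef
  have hκ : 0 < κ := by positivity
  set Fv : ℕ → ℝ := fun k => f (x k) (yb k) + g (yb k) with hFv
  set Fstar : ℝ := f xs ys + g ys with hFstar
  have hLκ : L / 2 ≤ κ := by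
    rw [hκdef, div_le_div_iff₀ two_pos (by positivity)]
    have h1 : ρ * L ≤ 1 := (le_div_iff₀ hL).1 hρL
    nlinarith
  have hdesc : ∀ k : ℕ,
      f (x (k + 1)) (yb (k + 1)) ≤ f (x (k + 1)) (yb k)
        + ⟪gy (x (k + 1)) (yb k), yb (k + 1) - yb k⟫
        + L / 2 * ‖yb (k + 1) - yb k‖ ^ 2 := fun k =>
    descent_lemma (hgy (x (k + 1))) hL.le (hLip (x (k + 1))) (yb k) (yb (k + 1))
  have hprox : ∀ k : ℕ, ∀ w,
      ⟪gy (x (k + 1)) (yb k), yb (k + 1) - yb k⟫ + κ * ‖yb (k + 1) - yb k‖ ^ 2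
          + g (yb (k + 1)) ≤
        ⟪gy (x (k + 1)) (yb k), w - yb k⟫ + κ * ‖w - yb k‖ ^ 2 + g w
          - κ * ‖w - yb (k + 1)‖ ^ 2 := fun k w =>
    strong_prox hg hρ (gy (x (k + 1)) (yb k)) (yb k) (yb (k + 1)) (hy k) w
  have hjoint : ∀ k : ℕ,
      f (x (k + 1)) (yb k) + ⟪gy (x (k + 1)) (yb k), ys - yb k⟫ ≤ f xs ys := fun k =>
    joint_conv_ineq hf hfd (hgy (x (k + 1)) (yb k)) (hx k) xs ys
  have hstep : ∀ k : ℕ, Fv (k + 1) - Fstar ≤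
      κ * (‖yb k - ys‖ ^ 2 - ‖yb (k + 1) - ys‖ ^ 2) := by
    intro k
    have h1 := hdesc k
    have h2 := hprox k ys
    have h3 := hjoint k
    have h4 : L / 2 * ‖yb (k + 1) - yb k‖ ^ 2 ≤ κ * ‖yb (k + 1) - yb k‖ ^ 2 :=
      mul_le_mul_of_nonneg_right hLκ (sq_nonneg _)
    have h5 : ‖ys - yb k‖ ^ 2 = ‖yb k - ys‖ ^ 2 := by rw [norm_sub_rev]
    have h6 : ‖ys - yb (k + 1)‖ ^ 2 = ‖yb (k + 1) - ys‖ ^ 2 := by rw [norm_sub_rev]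
    rw [h5, h6] at h2
    simp only [hFv, hFstar]
    linarith
  have hmono : ∀ k : ℕ, Fv (k + 1) ≤ Fv k := by
    intro k
    have h1 := hdesc k
    have h2 := hprox k (yb k)
    have h4 : L / 2 * ‖yb (k + 1) - yb k‖ ^ 2 ≤ κ * ‖yb (k + 1) - yb k‖ ^ 2 :=
      mul_le_mul_of_nonneg_right hLκ (sq_nonneg _)
    have h5 := hx k (x k)
    have h6 : (⟪gy (x (k + 1)) (yb k), yb k - yb k⟫ : ℝ) = 0 := by simp
    have h7 : ‖yb k - yb k‖ ^ 2 = (0:ℝ) := by simp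
    rw [h6, h7] at h2
    have h8 : 0 ≤ κ * ‖yb k - yb (k + 1)‖ ^ 2 := by positivity
    simp only [hFv]
    nlinarith
  have hsum : ∀ k : ℕ, (k : ℝ) * (Fv k - Fstar) ≤
      κ * (‖yb 0 - ys‖ ^ 2 - ‖yb k - ys‖ ^ 2) := by
    intro k
    induction k with
    | zero => simp
    | succ n ih =>
      have h1 := hstep n
      have h2 := hmono n
      have hn : (0:ℝ) ≤ (n : ℝ) := Nat.cast_nonneg n
      have hcast : ((n + 1 : ℕ) : ℝ) = (n : ℝ) + 1 := by push_cast; ring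
      rw [hcast]
      nlinarith [mul_le_mul_of_nonneg_left h2 hn]
  intro k hk
  have hkpos : (0:ℝ) < (k : ℝ) := by
    have : (1:ℝ) ≤ (k : ℝ) := by exact_mod_cast hk
    linarith
  have h1 := hsum k
  have h2 : (k : ℝ) * (Fv k - Fstar) ≤ κ * ‖yb 0 - ys‖ ^ 2 := by
    have := mul_nonneg hκ.le (sq_nonneg ‖yb k - ys‖)
    nlinarith
  have hgoal : Fv k - Fstar ≤ ‖yb 0 - ys‖ ^ 2 / (2 * ρ * k) := by
    rw [le_div_iff₀ (by positivity : (0:ℝ) < 2 * ρ * (k:ℝ))]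
    have h3 := mul_le_mul_of_nonneg_left h2 (by positivity : (0:ℝ) ≤ 2 * ρ)
    have h4 : 2 * ρ * (κ * ‖yb 0 - ys‖ ^ 2) = ‖yb 0 - ys‖ ^ 2 := by
      rw [hκdef]; field_simp
    nlinarith [h3, h4]
  simpa [hFv, hFstar] using hgoal
end

section
/- Under the assumptions of the previous statement, and with the FISTA-type acceleration (momentum sequence t_0 = 1, t_{k+1} = (1 + √(1 + 4t_k²))/2, z^{k+1} = ȳ^{k+1} + ((t_k - 1)/t_{k+1})(ȳ^{k+1} - ȳ^k), with x^{k+1} = argmin_x f(x, z^k) and ȳ^{k+1} the proximal-linearized update at z^k), the iterates satisfy F(x^k, ȳ^k) - F(x*, y*) ≤ 2‖ȳ^0 - y*‖² / (ρ(k+1)²) for ρ ≤ 1/L_y(f). -/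
open RealInnerProductSpace InnerProductSpace

section auxFista

lemma fista_convex_grad_ineq {V : Type*} [NormedAddCommGroup V] [NormedSpace ℝ V]
    {φ : V → ℝ} (hφ : ConvexOn ℝ Set.univ φ) {a : V} {D : V →L[ℝ] ℝ}
    (hD : HasFDerivAt φ D a) (b : V) : φ a + D (b - a) ≤ φ b := by
  set ψ : ℝ → ℝ := fun s => φ (AffineMap.lineMap a b s) with hψdef
  have hψ : ConvexOn ℝ Set.univ ψ := by
    have := hφ.comp_affineMap (AffineMap.lineMap a b : ℝ →ᵃ[ℝ] V)
    exact this
  have hline : HasDerivAt (fun s : ℝ => AffineMap.lineMap a b s : ℝ → V) (b - a) (0:ℝ) := by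
    have : HasDerivAt (fun s : ℝ => s • (b - a) + a) (b - a) (0:ℝ) := by
      simpa using ((hasDerivAt_id (0:ℝ)).smul_const (b - a)).add_const a
    refine this.congr_of_eventuallyEq (Filter.Eventually.of_forall fun s => ?_)
    simp [AffineMap.lineMap_apply_module]; module
  have hda : HasDerivAt ψ (D (b - a)) 0 := by
    have h0 : (AffineMap.lineMap a b : ℝ →ᵃ[ℝ] V) (0:ℝ) = a := by simp
    exact (h0 ▸ hD).comp_hasDerivAt (0:ℝ) hline
  have := hψ.le_slope_of_hasDerivAt (Set.mem_univ (0:ℝ)) (Set.mem_univ (1:ℝ)) one_pos hda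
  rw [slope_def_field] at this
  have h0 : ψ 0 = φ a := by simp [hψdef]
  have h1 : ψ 1 = φ b := by simp [hψdef]
  rw [h0, h1] at this
  have : D (b - a) ≤ φ b - φ a := by simpa using this
  linarith

lemma fista_norm_combo_sq {F : Type*} [NormedAddCommGroup F] [InnerProductSpace ℝ F]
    (a b : F) (θ : ℝ) :
    ‖a + θ • (b - a)‖ ^ 2 = (1 - θ) * ‖a‖ ^ 2 + θ * ‖b‖ ^ 2 - θ * (1 - θ) * ‖a - b‖ ^ 2 := by
  simp only [← real_inner_self_eq_norm_sq, inner_add_left, inner_add_right, inner_sub_left,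
    inner_sub_right, real_inner_smul_left, real_inner_smul_right]
  rw [real_inner_comm b a]
  ring

lemma fista_identity {F : Type*} [NormedAddCommGroup F] [InnerProductSpace ℝ F]
    (s : ℝ) (zz yb yp ys : F) :
    s * ((s - 1) * (‖yb - zz‖ ^ 2 - ‖yb - yp‖ ^ 2) + (‖ys - zz‖ ^ 2 - ‖ys - yp‖ ^ 2)) =
      ‖s • zz - (s - 1) • yb - ys‖ ^ 2 - ‖s • yp - (s - 1) • yb - ys‖ ^ 2 := by
  simp only [← real_inner_self_eq_norm_sq, inner_add_left, inner_add_right, inner_sub_left,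
    inner_sub_right, real_inner_smul_left, real_inner_smul_right]
  rw [real_inner_comm zz yb, real_inner_comm ys yb, real_inner_comm ys zz, real_inner_comm yp yb,
    real_inner_comm ys yp]
  ring

lemma fista_line_hasDerivAt {F : Type*} [NormedAddCommGroup F] [InnerProductSpace ℝ F]
    [CompleteSpace F] {h : F → ℝ} {G : F} (y d : F) (s : ℝ)
    (hG : HasGradientAt h G (y + s • d)) :
    HasDerivAt (fun s : ℝ => h (y + s • d)) ⟪G, d⟫ s := by
  have hline : HasDerivAt (fun s : ℝ => y + s • d) d s := by
    simpa using ((hasDerivAt_id s).smul_const d).const_add y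
  have := (hG.hasFDerivAt).comp_hasDerivAt s hline
  simpa [toDual_apply_apply, Function.comp_def] using this

lemma fista_descent {F : Type*} [NormedAddCommGroup F] [InnerProductSpace ℝ F] [CompleteSpace F]
    {h : F → ℝ} {G : F → F} (hG : ∀ p, HasGradientAt h (G p) p)
    {L : ℝ} (hLip : ∀ p q, ‖G p - G q‖ ≤ L * ‖p - q‖) (y d : F) :
    h (y + d) ≤ h y + ⟪G y, d⟫ + L / 2 * ‖d‖ ^ 2 := by
  set χ : ℝ → ℝ := fun s => L / 2 * ‖d‖ ^ 2 * s ^ 2 + s * ⟪G y, d⟫ - h (y + s • d) with hχ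
  have hd : ∀ s : ℝ, HasDerivAt χ (L * ‖d‖ ^ 2 * s + ⟪G y, d⟫ - ⟪G (y + s • d), d⟫) s := by
    intro s
    have h1 : HasDerivAt (fun s : ℝ => L / 2 * ‖d‖ ^ 2 * s ^ 2) (L / 2 * ‖d‖ ^ 2 * (2 * s)) s := by
      simpa using ((hasDerivAt_pow 2 s).const_mul (L / 2 * ‖d‖ ^ 2))
    have h2 : HasDerivAt (fun s : ℝ => s * ⟪G y, d⟫) ⟪G y, d⟫ s := by
      simpa using (hasDerivAt_id s).mul_const (⟪G y, d⟫)
    have h3 := fista_line_hasDerivAt y d s (hG _)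
    have := (h1.add h2).sub h3
    exact this.congr_deriv (by ring)
  have hmono : MonotoneOn χ (Set.Icc (0:ℝ) 1) := by
    apply monotoneOn_of_deriv_nonneg (convex_Icc 0 1)
    · exact fun s _ => (hd s).differentiableAt.continuousAt.continuousWithinAt
    · exact fun s _ => ((hd s).differentiableAt).differentiableWithinAt
    · intro s hs
      rw [interior_Icc] at hs
      rw [(hd s).deriv]
      have hb : ⟪G (y + s • d) - G y, d⟫ ≤ L * s * ‖d‖ ^ 2 := by
        calc ⟪G (y + s • d) - G y, d⟫ ≤ ‖G (y + s • d) - G y‖ * ‖d‖ := real_inner_le_norm _ _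
        _ ≤ (L * ‖(y + s • d) - y‖) * ‖d‖ := by gcongr; exact hLip _ _
        _ = L * s * ‖d‖ ^ 2 := by
            simp [norm_smul, abs_of_pos hs.1]; ring
      have : ⟪G (y + s • d), d⟫ - ⟪G y, d⟫ ≤ L * s * ‖d‖ ^ 2 := by
        rw [← inner_sub_left]; exact hb
      nlinarith
  have h01 := hmono (Set.mem_Icc.2 ⟨le_refl 0, zero_le_one⟩)
    (Set.mem_Icc.2 ⟨zero_le_one, le_refl 1⟩) zero_le_one
  simp only [hχ] at h01
  simp at h01
  linarith [h01]

lemma fista_key1 {E1 E2 : Type*} [NormedAddCommGroup E1] [NormedSpace ℝ E1]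
    [NormedAddCommGroup E2] [InnerProductSpace ℝ E2] [CompleteSpace E2]
    (f : E1 → E2 → ℝ)
    (hf : ConvexOn ℝ Set.univ (fun q : E1 × E2 => f q.1 q.2))
    (hfd : Differentiable ℝ (fun q : E1 × E2 => f q.1 q.2))
    (a : E1) (zz : E2) (G : E2)
    (hG : HasGradientAt (fun y' => f a y') G zz)
    (hmin : ∀ x', f a zz ≤ f x' zz) :
    ∀ x' w, f a zz + ⟪G, w - zz⟫ ≤ f x' w := by
  intro x' w
  set φ : E1 × E2 → ℝ := fun q => f q.1 q.2 with hφdef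
  have hD : HasFDerivAt φ (fderiv ℝ φ (a, zz)) (a, zz) := (hfd (a, zz)).hasFDerivAt
  set D := fderiv ℝ φ (a, zz) with hDdef
  have hx0 : D.comp (ContinuousLinearMap.inl ℝ E1 E2) = 0 := by
    have hcomp : HasFDerivAt (fun x' => f x' zz) (D.comp (ContinuousLinearMap.inl ℝ E1 E2)) a :=
      by have := hD.comp (f := fun e : E1 => (e, zz)) a (hasFDerivAt_prodMk_left (𝕜 := ℝ) a zz); exact this
    have hlm : IsLocalMin (fun x' => f x' zz) a :=
      Filter.Eventually.of_forall fun x' => hmin x'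
    exact hlm.hasFDerivAt_eq_zero hcomp
  have hy0 : D.comp (ContinuousLinearMap.inr ℝ E1 E2) = toDual ℝ E2 G := by
    have hcomp : HasFDerivAt (fun y' => f a y') (D.comp (ContinuousLinearMap.inr ℝ E1 E2)) zz :=
      hD.comp zz (hasFDerivAt_prodMk_right a zz)
    exact hcomp.unique hG.hasFDerivAt
  have hsplit : D ((x', w) - (a, zz)) = ⟪G, w - zz⟫ := by
    have hsum : ((x', w) - (a, zz) : E1 × E2) = (x' - a, 0) + (0, w - zz) := by
      simp [Prod.ext_iff]
    rw [hsum, map_add]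
    have e1 : D ((x' - a, 0) : E1 × E2) = 0 := by
      have := congrFun (congrArg DFunLike.coe hx0) (x' - a)
      simpa using this
    have e2 : D ((0, w - zz) : E1 × E2) = ⟪G, w - zz⟫ := by
      have := congrFun (congrArg DFunLike.coe hy0) (w - zz)
      simpa using this
    rw [e1, e2, zero_add]
  have := fista_convex_grad_ineq hf hD (x', w)
  rw [hsplit] at this
  exact this

set_option maxHeartbeats 1000000 in
lemma fista_strong_min {F : Type*} [NormedAddCommGroup F] [InnerProductSpace ℝ F]
    (g : F → ℝ) (hg : ConvexOn ℝ Set.univ g) (G zz yb : F) (c : ℝ) (hc : 0 < c)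
    (hy : ∀ w, ⟪G, yb - zz⟫ + c * ‖yb - zz‖ ^ 2 + g yb ≤ ⟪G, w - zz⟫ + c * ‖w - zz‖ ^ 2 + g w)
    (w : F) :
    ⟪G, yb - zz⟫ + c * ‖yb - zz‖ ^ 2 + g yb + c * ‖w - yb‖ ^ 2 ≤
      ⟪G, w - zz⟫ + c * ‖w - zz‖ ^ 2 + g w := by
  refine le_of_forall_pos_le_add fun ε hε => ?_
  set θ : ℝ := min 1 (ε / (c * ‖w - yb‖ ^ 2 + 1)) with hθdef
  have hden : 0 < c * ‖w - yb‖ ^ 2 + 1 := by positivity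
  have hθpos : 0 < θ := lt_min one_pos (div_pos hε hden)
  have hθ1 : θ ≤ 1 := min_le_left _ _
  set v : F := yb + θ • (w - yb) with hvdef
  have h1 := hy v
  have hinner : ⟪G, v - zz⟫ = ⟪G, yb - zz⟫ + θ * ⟪G, w - yb⟫ := by
    simp [hvdef, inner_add_right, inner_sub_right, real_inner_smul_right]
    ring
  have hinner2 : ⟪G, w - yb⟫ = ⟪G, w - zz⟫ - ⟪G, yb - zz⟫ := by
    simp [inner_sub_right]
  have hnorm : ‖v - zz‖ ^ 2 = (1 - θ) * ‖yb - zz‖ ^ 2 + θ * ‖w - zz‖ ^ 2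
      - θ * (1 - θ) * ‖yb - w‖ ^ 2 := by
    have hv : v - zz = (yb - zz) + θ • ((w - zz) - (yb - zz)) := by
      simp [hvdef]; module
    rw [hv, fista_norm_combo_sq, show yb - zz - (w - zz) = yb - w from by module]
  have hgv : g v ≤ (1 - θ) * g yb + θ * g w := by
    have hv : v = (1 - θ) • yb + θ • w := by simp [hvdef]; module
    rw [hv]
    exact hg.2 (Set.mem_univ yb) (Set.mem_univ w) (by linarith) (le_of_lt hθpos) (by ring)
  have hnw : ‖yb - w‖ = ‖w - yb‖ := norm_sub_rev _ _
  have key : θ * (⟪G, yb - zz⟫ + c * ‖yb - zz‖ ^ 2 + g yb) + c * θ * (1 - θ) * ‖w - yb‖ ^ 2 ≤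
      θ * (⟪G, w - zz⟫ + c * ‖w - zz‖ ^ 2 + g w) := by
    rw [hinner, hinner2] at h1
    rw [hnorm] at h1
    rw [hnw] at h1
    nlinarith [h1, hgv]
  have key2 : ⟪G, yb - zz⟫ + c * ‖yb - zz‖ ^ 2 + g yb + c * (1 - θ) * ‖w - yb‖ ^ 2 ≤
      ⟪G, w - zz⟫ + c * ‖w - zz‖ ^ 2 + g w := by
    have := mul_le_mul_of_nonneg_left key (le_of_lt (inv_pos.2 hθpos))
    rw [mul_comm] at this
    nlinarith [key, hθpos]
  have hεb : c * θ * ‖w - yb‖ ^ 2 ≤ ε := by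
    have hθle : θ ≤ ε / (c * ‖w - yb‖ ^ 2 + 1) := min_le_right _ _
    have h2 : c * θ * ‖w - yb‖ ^ 2 ≤ (ε / (c * ‖w - yb‖ ^ 2 + 1)) * (c * ‖w - yb‖ ^ 2) := by
      have hn : (0:ℝ) ≤ c * ‖w - yb‖ ^ 2 := by positivity
      nlinarith [hθle, hn]
    have h3 : (ε / (c * ‖w - yb‖ ^ 2 + 1)) * (c * ‖w - yb‖ ^ 2) ≤ ε := by
      rw [div_mul_eq_mul_div, div_le_iff₀ hden]
      nlinarith [hε]
    linarith
  nlinarith [key2, hεb]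

end auxFista

set_option maxHeartbeats 2000000 in
/-- O(1/k²) convergence rate of FISTA with partial linearization (Theorem 3.2):
with momentum sequence `t_0 = 1`, `t_{k+1} = (1+√(1+4t_k²))/2`,
`z^{k+1} = ȳ^{k+1} + ((t_k-1)/t_{k+1})(ȳ^{k+1} - ȳ^k)`, `x^{k+1} = argmin_x f(x, z^k)`
and `ȳ^{k+1}` the prox-linearized update at `z^k`, the iterates satisfy
`F(x^k, ȳ^k) - F(x*, y*) ≤ 2‖ȳ^0 - y*‖²/(ρ(k+1)²)` for `ρ ≤ 1/L_y(f)`. -/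
theorem stmt9 (m M : ℕ)
    (f : EuclideanSpace ℝ (Fin m) → EuclideanSpace ℝ (Fin M) → ℝ)
    (g : EuclideanSpace ℝ (Fin M) → ℝ)
    (gy : EuclideanSpace ℝ (Fin m) → EuclideanSpace ℝ (Fin M) → EuclideanSpace ℝ (Fin M))
    (hf : ConvexOn ℝ Set.univ (fun q : EuclideanSpace ℝ (Fin m) × EuclideanSpace ℝ (Fin M) => f q.1 q.2))
    (hfd : Differentiable ℝ (fun q : EuclideanSpace ℝ (Fin m) × EuclideanSpace ℝ (Fin M) => f q.1 q.2))
    (hg : ConvexOn ℝ Set.univ g)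
    (hgy : ∀ x y, HasGradientAt (fun y' => f x y') (gy x y) y)
    (L : ℝ) (hL : 0 < L)
    (hLip : ∀ x y z, ‖gy x y - gy x z‖ ≤ L * ‖y - z‖)
    (ρ : ℝ) (hρ : 0 < ρ) (hρL : ρ ≤ 1 / L)
    (t : ℕ → ℝ) (ht0 : t 0 = 1)
    (htrec : ∀ k, t (k + 1) = (1 + Real.sqrt (1 + 4 * t k ^ 2)) / 2)
    (x : ℕ → EuclideanSpace ℝ (Fin m))
    (yb z : ℕ → EuclideanSpace ℝ (Fin M))
    (hz0 : z 0 = yb 0)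
    (hzrec : ∀ k, z (k + 1) = yb (k + 1) + ((t k - 1) / t (k + 1)) • (yb (k + 1) - yb k))
    (hx : ∀ k x', f (x (k + 1)) (z k) ≤ f x' (z k))
    (hy : ∀ k w,
      ⟪gy (x (k + 1)) (z k), yb (k + 1) - z k⟫
          + (1 / (2 * ρ)) * ‖yb (k + 1) - z k‖ ^ 2 + g (yb (k + 1)) ≤
        ⟪gy (x (k + 1)) (z k), w - z k⟫ + (1 / (2 * ρ)) * ‖w - z k‖ ^ 2 + g w)
    (xs : EuclideanSpace ℝ (Fin m)) (ys : EuclideanSpace ℝ (Fin M))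
    (hmin : ∀ x' y', f xs ys + g ys ≤ f x' y' + g y') :
    ∀ k : ℕ, 1 ≤ k →
      (f (x k) (yb k) + g (yb k)) - (f xs ys + g ys) ≤
        2 * ‖yb 0 - ys‖ ^ 2 / (ρ * (k + 1) ^ 2) := by
  have hc : (0:ℝ) < 1 / (2 * ρ) := by positivity
  have hLhalf : L / 2 ≤ 1 / (2 * ρ) := by
    rw [div_le_div_iff₀ (by norm_num) (by positivity)]
    have : ρ * L ≤ 1 := by
      rw [le_div_iff₀ hL] at hρL
      linarith
    nlinarith
  -- per-step inequality
  have step : ∀ (k : ℕ) (x' : EuclideanSpace ℝ (Fin m)) (w : EuclideanSpace ℝ (Fin M)),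
      (f (x (k+1)) (yb (k+1)) + g (yb (k+1))) - (f x' w + g w) ≤
        (1 / (2 * ρ)) * (‖w - z k‖ ^ 2 - ‖w - yb (k+1)‖ ^ 2) := by
    intro k x' w
    set G := gy (x (k+1)) (z k) with hG
    have hdesc : f (x (k+1)) (yb (k+1)) ≤
        f (x (k+1)) (z k) + ⟪G, yb (k+1) - z k⟫ + L / 2 * ‖yb (k+1) - z k‖ ^ 2 := by
      have := fista_descent (hgy (x (k+1))) (hLip (x (k+1))) (z k) (yb (k+1) - z k)
      rwa [show z k + (yb (k+1) - z k) = yb (k+1) from by module] at this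
    have hsm := fista_strong_min g hg G (z k) (yb (k+1)) (1 / (2 * ρ)) hc (hy k) w
    have hk1 := fista_key1 f hf hfd (x (k+1)) (z k) G (hgy (x (k+1)) (z k)) (hx k) x' w
    have hsq : (0:ℝ) ≤ ‖yb (k+1) - z k‖ ^ 2 := by positivity
    nlinarith [hdesc, hsm, hk1, hsq, hLhalf]
  -- facts about t
  have ht1 : ∀ k, 1 ≤ t k := by
    intro k
    induction k with
    | zero => rw [ht0]
    | succ n ih =>
      rw [htrec n]
      have h1 : (1:ℝ) ≤ Real.sqrt (1 + 4 * t n ^ 2) := by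
        have := Real.sqrt_le_sqrt (show (1:ℝ) ≤ 1 + 4 * t n ^ 2 by nlinarith)
        rwa [Real.sqrt_one] at this
      linarith
  have htpos : ∀ k, 0 < t k := fun k => lt_of_lt_of_le one_pos (ht1 k)
  have htsq : ∀ k, t (k+1) ^ 2 - t (k+1) = t k ^ 2 := by
    intro k
    have h1 : 2 * t (k+1) - 1 = Real.sqrt (1 + 4 * t k ^ 2) := by
      rw [htrec k]; ring
    have h2 : (Real.sqrt (1 + 4 * t k ^ 2)) ^ 2 = 1 + 4 * t k ^ 2 :=
      Real.sq_sqrt (by positivity)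
    nlinarith [h1, h2]
  have htge : ∀ k : ℕ, ((k:ℝ) + 2) / 2 ≤ t k := by
    intro k
    induction k with
    | zero => simp [ht0]
    | succ n ih =>
      rw [htrec n]
      have h1 : 2 * t n ≤ Real.sqrt (1 + 4 * t n ^ 2) := by
        have h2 := Real.sqrt_le_sqrt (show (2 * t n) ^ 2 ≤ 1 + 4 * t n ^ 2 by nlinarith)
        rwa [Real.sqrt_sq (by linarith [ht1 n] : (0:ℝ) ≤ 2 * t n)] at h2
      push_cast
      linarith
  -- energy sequence
  set a : ℕ → ℝ := fun k => (f (x k) (yb k) + g (yb k)) - (f xs ys + g ys) with ha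
  have ha0 : ∀ k, 0 ≤ a k := fun k => by simp [ha]; linarith [hmin (x k) (yb k)]
  set u : ℕ → EuclideanSpace ℝ (Fin M) :=
    fun k => t k • yb (k+1) - (t k - 1) • yb k - ys with hu
  set En : ℕ → ℝ := fun k => 2 * ρ * t k ^ 2 * a (k+1) + ‖u k‖ ^ 2 with hE
  have h2ρc : 2 * ρ * (1 / (2 * ρ)) = 1 := by field_simp
  -- base case
  have base : En 0 ≤ ‖yb 0 - ys‖ ^ 2 := by
    have h1 := step 0 xs ys
    rw [hz0] at h1
    have hu0 : u 0 = yb 1 - ys := by simp [hu, ht0]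
    have hn1 : ‖ys - yb 1‖ = ‖yb 1 - ys‖ := norm_sub_rev _ _
    have hn0 : ‖ys - yb 0‖ = ‖yb 0 - ys‖ := norm_sub_rev _ _
    simp only [hE, hu0, ht0]
    rw [← hn0]
    have ha1 : a 1 = (f (x 1) (yb 1) + g (yb 1)) - (f xs ys + g ys) := by rw [ha]
    rw [hn1] at h1
    nlinarith [h1, hρ]
  -- inductive step
  have ind : ∀ k, En (k+1) ≤ En k := by
    intro k
    have h1 := step (k+1) (x (k+1)) (yb (k+1))
    have h2 := step (k+1) xs ys
    set j := k + 1 with hj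
    set A1 := ‖yb j - z j‖ ^ 2 with hA1
    set A2 := ‖yb j - yb (j+1)‖ ^ 2 with hA2
    set B1 := ‖ys - z j‖ ^ 2 with hB1
    set B2 := ‖ys - yb (j+1)‖ ^ 2 with hB2
    -- vector identity linking z and u
    have hz' : t j • z j = t j • yb j + (t k - 1) • (yb j - yb k) := by
      rw [hzrec k, smul_add, smul_smul, mul_div_cancel₀ _ (ne_of_gt (htpos j))]
    have huk : t j • z j - (t j - 1) • yb j - ys = u k := by
      rw [hz']
      simp only [hu]
      have hts : t j - 1 + 1 = t j := by ring
      module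
    have hfid : t j * ((t j - 1) * (A1 - A2) + (B1 - B2)) = ‖u k‖ ^ 2 - ‖u j‖ ^ 2 := by
      have := fista_identity (t j) (z j) (yb j) (yb (j+1)) ys
      rw [huk] at this
      rw [show t j • yb (j+1) - (t j - 1) • yb j - ys = u j from rfl] at this
      exact this
    have htj1 : 1 ≤ t j := ht1 j
    have htjpos : 0 < t j := htpos j
    -- combine
    have h3 : (t j - 1) * (a (j+1) - a j) + a (j+1) ≤
        (t j - 1) * ((1 / (2 * ρ)) * (A1 - A2)) + (1 / (2 * ρ)) * (B1 - B2) := by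
      have hm := mul_le_mul_of_nonneg_left h1 (by linarith : (0:ℝ) ≤ t j - 1)
      linarith [hm, h2]
    have h4 := mul_le_mul_of_nonneg_left h3 (by positivity : (0:ℝ) ≤ 2 * ρ * t j)
    have hRHS : 2 * ρ * t j * ((t j - 1) * ((1 / (2 * ρ)) * (A1 - A2)) +
        (1 / (2 * ρ)) * (B1 - B2)) = ‖u k‖ ^ 2 - ‖u j‖ ^ 2 := by
      rw [← hfid]
      field_simp
    have htsqj : t j ^ 2 - t j = t k ^ 2 := htsq k
    have hLHS : 2 * ρ * t j * ((t j - 1) * (a (j+1) - a j) + a (j+1)) =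
        2 * ρ * (t j ^ 2 * a (j+1) - t k ^ 2 * a j) := by
      linear_combination (-(2 * ρ * a j)) * htsqj
    rw [hRHS, hLHS] at h4
    simp only [hE]
    linarith [h4]
  -- telescope
  have mono : ∀ k, En k ≤ ‖yb 0 - ys‖ ^ 2 := by
    intro k
    induction k with
    | zero => exact base
    | succ n ih => exact le_trans (ind n) ih
  -- conclude
  intro k hk
  clear_value a u En
  obtain ⟨j, rfl⟩ : ∃ j, k = j + 1 := ⟨k - 1, (Nat.succ_pred_eq_of_pos hk).symm⟩
  have hEj := mono j
  have hub : 2 * ρ * t j ^ 2 * a (j+1) ≤ ‖yb 0 - ys‖ ^ 2 := by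
    have : (0:ℝ) ≤ ‖u j‖ ^ 2 := by positivity
    simp only [hE] at hEj
    linarith
  have htj : ((j:ℝ) + 2) / 2 ≤ t j := htge j
  have htj2 : (((j:ℝ) + 2) / 2) ^ 2 ≤ t j ^ 2 := by
    have h0 : (0:ℝ) ≤ ((j:ℝ) + 2) / 2 := by positivity
    nlinarith [htj, h0]
  have haj : 0 ≤ a (j+1) := ha0 (j+1)
  have hfin : a (j+1) ≤ 2 * ‖yb 0 - ys‖ ^ 2 / (ρ * ((j:ℝ)+1+1) ^ 2) := by
    rw [le_div_iff₀ (by positivity)]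
    have hmul := mul_le_mul_of_nonneg_left htj2 (by positivity : (0:ℝ) ≤ 2 * ρ * a (j+1))
    have key : 2 * ρ * a (j+1) * t j ^ 2 ≤ ‖yb 0 - ys‖ ^ 2 := by linarith [hub]
    have key2 : 2 * ρ * a (j+1) * (((j:ℝ) + 2) / 2) ^ 2 ≤ ‖yb 0 - ys‖ ^ 2 :=
      le_trans hmul key
    have hexp : 2 * ρ * a (j+1) * (((j:ℝ) + 2) / 2) ^ 2 =
        a (j+1) * (ρ * ((j:ℝ) + 1 + 1) ^ 2) / 2 := by ring
    rw [hexp] at key2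
    linarith only [key2]
  have : a (j+1) = (f (x (j+1)) (yb (j+1)) + g (yb (j+1))) - (f xs ys + g ys) := by rw [ha]
  rw [← this]
  convert hfin using 3
  push_cast
  ring
end

section
/- In the APLM-S algorithm with ρ ≤ 1/L_y(f), after k iterations of which k_n are regular (non-skipping) iterations, the iterates satisfy F(x^k, ȳ^k) - F(x*, y*) ≤ ‖ȳ^0 - y*‖² / (2ρ(k + k_n)). -/
open RealInnerProductSpace

lemma aux_slope1 {φ : ℝ → ℝ} (hc : ConvexOn ℝ Set.univ φ) {d : ℝ}
    (hd : HasDerivAt φ d 0) : φ 0 + d ≤ φ 1 := by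
  have h := hc.le_slope_of_hasDerivAt (Set.mem_univ 0) (Set.mem_univ 1) one_pos hd
  rw [slope_def_field] at h
  simp at h
  linarith

lemma descent_lemma_s11 {E : Type*} [NormedAddCommGroup E] [InnerProductSpace ℝ E] [CompleteSpace E]
    {ψ : E → ℝ} {G : E → E} (hdiff : ∀ v, HasGradientAt ψ (G v) v)
    {L : ℝ} (hL : 0 ≤ L) (hLip : ∀ u v, ‖G u - G v‖ ≤ L * ‖u - v‖) (yv w : E) :
    ψ w ≤ ψ yv + ⟪G yv, w - yv⟫ + L / 2 * ‖w - yv‖ ^ 2 := by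
  set c : ℝ → E := fun t => yv + t • (w - yv) with hcdef
  have hder : ∀ t : ℝ, HasDerivAt c (w - yv) t := by
    intro t
    exact (((hasDerivAt_id t).smul_const (w - yv)).const_add yv).congr_deriv (by simp)
  have hcomp : ∀ t : ℝ, HasDerivAt (fun s => ψ (c s)) ⟪G (c t), w - yv⟫ t := by
    intro t
    have h0 : HasFDerivAt ψ ((InnerProductSpace.toDual ℝ E) (G (c t))) (c t) :=
      (hdiff (c t)).hasFDerivAt
    have := h0.comp_hasDerivAt t (hder t)
    exact this
  have hGlip : LipschitzWith (Real.toNNReal L) G := by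
    apply LipschitzWith.of_dist_le_mul
    intro u v
    rw [dist_eq_norm, dist_eq_norm]
    simpa [Real.coe_toNNReal L hL] using hLip u v
  have hccont : Continuous c := by
    apply continuous_const.add (continuous_id.smul continuous_const)
  have hcont : Continuous fun t : ℝ => ⟪G (c t), w - yv⟫ :=
    ((hGlip.continuous.comp hccont).inner continuous_const)
  have hftc : ∫ t in (0:ℝ)..1, ⟪G (c t), w - yv⟫ = ψ (c 1) - ψ (c 0) := by
    exact intervalIntegral.integral_eq_sub_of_hasDerivAt (fun t _ => hcomp t)
      (hcont.intervalIntegrable 0 1)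
  have hbound : ∫ t in (0:ℝ)..1, ⟪G (c t), w - yv⟫ ≤
      ∫ t in (0:ℝ)..1, (⟪G yv, w - yv⟫ + L * t * ‖w - yv‖ ^ 2) := by
    apply intervalIntegral.integral_mono_on zero_le_one (hcont.intervalIntegrable 0 1)
    · exact (Continuous.intervalIntegrable (by continuity) 0 1)
    · intro t ht
      have h1 : ⟪G (c t), w - yv⟫ - ⟪G yv, w - yv⟫ = ⟪G (c t) - G yv, w - yv⟫ := by
        rw [inner_sub_left]
      have h2 : ⟪G (c t) - G yv, w - yv⟫ ≤ ‖G (c t) - G yv‖ * ‖w - yv‖ :=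
        real_inner_le_norm _ _
      have h3 : ‖G (c t) - G yv‖ ≤ L * (t * ‖w - yv‖) := by
        have := hLip (c t) yv
        simpa [hcdef, norm_smul, abs_of_nonneg ht.1] using this
      nlinarith [norm_nonneg (w - yv), mul_le_mul_of_nonneg_right h3 (norm_nonneg (w - yv)),
        mul_nonneg (mul_nonneg hL ht.1) (sq_nonneg ‖w - yv‖)]
  have hval : ∫ t in (0:ℝ)..1, (⟪G yv, w - yv⟫ + L * t * ‖w - yv‖ ^ 2) =
      ⟪G yv, w - yv⟫ + L / 2 * ‖w - yv‖ ^ 2 := by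
    rw [intervalIntegral.integral_add (intervalIntegrable_const)
      (Continuous.intervalIntegrable (by continuity) 0 1)]
    simp only [intervalIntegral.integral_const]
    have : ∫ t in (0:ℝ)..1, L * t * ‖w - yv‖ ^ 2 = L / 2 * ‖w - yv‖ ^ 2 := by
      have : (fun t : ℝ => L * t * ‖w - yv‖ ^ 2) = fun t : ℝ => (L * ‖w - yv‖ ^ 2) * t := by
        funext t; ring
      rw [this, intervalIntegral.integral_const_mul, integral_id]
      ring
    rw [this]
    simp
  have hc0 : c 0 = yv := by simp [hcdef]
  have hc1 : c 1 = w := by simp [hcdef]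
  rw [hc0, hc1] at hftc
  linarith [hbound.trans_eq hval, hftc]

lemma norm_combo_identity {F : Type*} [NormedAddCommGroup F] [InnerProductSpace ℝ F]
    (a b : F) (t : ℝ) :
    ‖(1 - t) • a + t • b‖ ^ 2 =
      (1 - t) * ‖a‖ ^ 2 + t * ‖b‖ ^ 2 - t * (1 - t) * ‖b - a‖ ^ 2 := by
  rw [@norm_add_sq_real, @norm_sub_sq_real, norm_smul, norm_smul,
    real_inner_smul_left, real_inner_smul_right]
  simp only [Real.norm_eq_abs, mul_pow, sq_abs]
  rw [real_inner_comm a b]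
  ring

lemma strong_min {G F : Type*} [NormedAddCommGroup F] [InnerProductSpace ℝ F]
    [AddCommGroup G] [Module ℝ G]
    {ψ : G → ℝ} (hψ : ConvexOn ℝ Set.univ ψ) (T : G →ₗ[ℝ] F) (yv : F) {ρ : ℝ} (hρ : 0 < ρ)
    {p : G} (hp : ∀ q, ψ p + 1 / (2 * ρ) * ‖T p - yv‖ ^ 2 ≤ ψ q + 1 / (2 * ρ) * ‖T q - yv‖ ^ 2)
    (q : G) :
    ψ p + 1 / (2 * ρ) * ‖T p - yv‖ ^ 2 + 1 / (2 * ρ) * ‖T q - T p‖ ^ 2 ≤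
      ψ q + 1 / (2 * ρ) * ‖T q - yv‖ ^ 2 := by
  set cc : ℝ := 1 / (2 * ρ) with hcc
  have hccpos : 0 < cc := by positivity
  have key : ∀ t : ℝ, 0 < t → t < 1 →
      ψ p + cc * ‖T p - yv‖ ^ 2 + (1 - t) * cc * ‖T q - T p‖ ^ 2 ≤
        ψ q + cc * ‖T q - yv‖ ^ 2 := by
    intro t ht0 ht1
    set z : G := (1 - t) • p + t • q with hz
    have hconv : ψ z ≤ (1 - t) * ψ p + t * ψ q :=
      hψ.2 (Set.mem_univ p) (Set.mem_univ q) (by linarith) (le_of_lt ht0) (by ring)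
    have hTz : T z - yv = (1 - t) • (T p - yv) + t • (T q - yv) := by
      simp only [hz, map_add, map_smul]
      module
    have hid : ‖T z - yv‖ ^ 2 =
        (1 - t) * ‖T p - yv‖ ^ 2 + t * ‖T q - yv‖ ^ 2 - t * (1 - t) * ‖T q - T p‖ ^ 2 := by
      rw [hTz, norm_combo_identity]
      congr 2
      abel
    have hmain := hp z
    rw [hid] at hmain
    have ht : t * (ψ p + cc * ‖T p - yv‖ ^ 2 + (1 - t) * cc * ‖T q - T p‖ ^ 2) ≤
        t * (ψ q + cc * ‖T q - yv‖ ^ 2) := by nlinarith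
    exact le_of_mul_le_mul_left ht ht0
  by_contra hcon
  push_neg at hcon
  set ε : ℝ := (ψ p + cc * ‖T p - yv‖ ^ 2 + cc * ‖T q - T p‖ ^ 2) -
      (ψ q + cc * ‖T q - yv‖ ^ 2) with hε
  have hεpos : 0 < ε := by simp only [hε]; linarith
  set t : ℝ := min (1 / 2) (ε / (cc * ‖T q - T p‖ ^ 2 + 1)) with htdef
  have hden : 0 < cc * ‖T q - T p‖ ^ 2 + 1 := by positivity
  have ht0 : 0 < t := lt_min (by norm_num) (div_pos hεpos hden)
  have ht1 : t < 1 := lt_of_le_of_lt (min_le_left _ _) (by norm_num)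
  have hkey := key t ht0 ht1
  have hsmall : t * (cc * ‖T q - T p‖ ^ 2) < ε := by
    have h1 : t ≤ ε / (cc * ‖T q - T p‖ ^ 2 + 1) := min_le_right _ _
    have h2 : t * (cc * ‖T q - T p‖ ^ 2 + 1) ≤ ε := by
      calc t * (cc * ‖T q - T p‖ ^ 2 + 1)
          ≤ (ε / (cc * ‖T q - T p‖ ^ 2 + 1)) * (cc * ‖T q - T p‖ ^ 2 + 1) :=
            mul_le_mul_of_nonneg_right h1 hden.le
        _ = ε := div_mul_cancel₀ _ (ne_of_gt hden)
    nlinarith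
  linarith [hkey, hsmall]

lemma key_min {E F : Type*} [NormedAddCommGroup E] [InnerProductSpace ℝ E] [CompleteSpace E]
    [NormedAddCommGroup F] [InnerProductSpace ℝ F] [CompleteSpace F]
    {f : E → F → ℝ}
    (hf : ConvexOn ℝ Set.univ (fun q : E × F => f q.1 q.2))
    (hfd : Differentiable ℝ (fun q : E × F => f q.1 q.2))
    {gk : F} {x1 : E} {y1 : F} (hg : HasGradientAt (fun y' => f x1 y') gk y1)
    (hminx : ∀ x', f x1 y1 ≤ f x' y1) (xs : E) (ys : F) :
    f x1 y1 + ⟪gk, ys - y1⟫ ≤ f xs ys := by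
  set F2 : E × F → ℝ := fun q => f q.1 q.2 with hF2
  have hD : HasFDerivAt F2 (fderiv ℝ F2 (x1, y1)) (x1, y1) := (hfd (x1, y1)).hasFDerivAt
  set D := fderiv ℝ F2 (x1, y1) with hDdef
  have hinr : HasFDerivAt (fun y' : F => (x1, y'))
      ((ContinuousLinearMap.inr ℝ E F)) y1 :=
    HasFDerivAt.prodMk (hasFDerivAt_const x1 y1) (hasFDerivAt_id y1)
  have hpartialy : HasFDerivAt (fun y' => f x1 y')
      (D.comp (ContinuousLinearMap.inr ℝ E F)) y1 := hD.comp y1 hinr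
  have hyeq : D.comp (ContinuousLinearMap.inr ℝ E F) =
      (InnerProductSpace.toDual ℝ F) gk := hpartialy.unique hg.hasFDerivAt
  have hDy : ∀ v : F, D (0, v) = ⟪gk, v⟫ := by
    intro v
    have : D.comp (ContinuousLinearMap.inr ℝ E F) v = ⟪gk, v⟫ := by
      rw [hyeq]; simp [InnerProductSpace.toDual_apply_apply]
    simpa using this
  have hDx : D (xs - x1, 0) = 0 := by
    set s : ℝ → ℝ := fun t => F2 (x1 + t • (xs - x1), y1) with hs
    have hcur : HasDerivAt (fun t : ℝ => (x1 + t • (xs - x1), y1)) (xs - x1, (0 : F)) 0 := by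
      have := HasDerivAt.prodMk (((hasDerivAt_id (0:ℝ)).smul_const (xs - x1)).const_add x1)
        (hasDerivAt_const (0:ℝ) y1)
      simpa using this
    have hD0 : HasFDerivAt F2 D (x1 + (0:ℝ) • (xs - x1), y1) := by simpa using hD
    have hders : HasDerivAt s (D (xs - x1, 0)) 0 := by
      exact hD0.comp_hasDerivAt 0 hcur
    have hlm : IsLocalMin s 0 := by
      apply Filter.Eventually.of_forall
      intro t
      show F2 (x1 + (0:ℝ) • (xs - x1), y1) ≤ _
      simpa [hF2] using hminx (x1 + t • (xs - x1))
    exact hlm.hasDerivAt_eq_zero hders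
  set c : ℝ → E × F := fun t => (x1, y1) + t • ((xs, ys) - (x1, y1)) with hcdef
  have hder : ∀ t : ℝ, HasDerivAt c ((xs, ys) - (x1, y1)) t := by
    intro t
    exact (((hasDerivAt_id t).smul_const ((xs, ys) - (x1, y1))).const_add (x1, y1)).congr_deriv (by simp)
  have hcomp : HasDerivAt (fun t => F2 (c t)) (D ((xs, ys) - (x1, y1))) 0 := by
    have hD0 : HasFDerivAt F2 D (c 0) := by simpa [hcdef] using hD
    exact hD0.comp_hasDerivAt 0 (hder 0)
  have hconv : ConvexOn ℝ Set.univ (fun t => F2 (c t)) := by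
    have heq : (fun t => F2 (c t)) =
        F2 ∘ (AffineMap.lineMap (x1, y1) (xs, ys) : ℝ →ᵃ[ℝ] E × F) := by
      funext t
      simp only [hcdef, AffineMap.lineMap_apply, Function.comp]
      rw [add_comm]
      rfl
    rw [heq]
    simpa using hf.comp_affineMap (AffineMap.lineMap (x1, y1) (xs, ys))
  have hslope := aux_slope1 hconv hcomp
  have hDv : D ((xs, ys) - (x1, y1)) = ⟪gk, ys - y1⟫ := by
    have hsplit : ((xs, ys) - (x1, y1) : E × F) = (xs - x1, 0) + (0, ys - y1) := by
      simp [Prod.ext_iff]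
    rw [hsplit, map_add, hDx, hDy]
    ring
  have hc0 : c 0 = (x1, y1) := by simp [hcdef]
  have hc1 : c 1 = (xs, ys) := by simp [hcdef]
  rw [hDv, hc0, hc1] at hslope
  simpa [hF2] using hslope

set_option maxHeartbeats 1000000 in
/-- Theorem 3.1: convergence rate of APLM-S.  With `ρ ≤ 1/L_y(f)`, after `k`
iterations of which `k_n` are regular (non-skipping), the iterates satisfy
`F(x^k, ȳ^k) - F(x*, y*) ≤ ‖ȳ^0 - y*‖²/(2ρ(k + k_n))`. -/
theorem stmt11 (m M : ℕ)
    (f : EuclideanSpace ℝ (Fin m) → EuclideanSpace ℝ (Fin M) → ℝ)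
    (g : EuclideanSpace ℝ (Fin M) → ℝ)
    (gy : EuclideanSpace ℝ (Fin m) → EuclideanSpace ℝ (Fin M) → EuclideanSpace ℝ (Fin M))
    (hf : ConvexOn ℝ Set.univ (fun q : EuclideanSpace ℝ (Fin m) × EuclideanSpace ℝ (Fin M) => f q.1 q.2))
    (hfd : Differentiable ℝ (fun q : EuclideanSpace ℝ (Fin m) × EuclideanSpace ℝ (Fin M) => f q.1 q.2))
    (hg : ConvexOn ℝ Set.univ g)
    (hgy : ∀ x y, HasGradientAt (fun y' => f x y') (gy x y) y)
    (L : ℝ) (hL : 0 < L)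
    (hLip : ∀ x y z, ‖gy x y - gy x z‖ ≤ L * ‖y - z‖)
    (ρ : ℝ) (hρ : 0 < ρ) (hρL : ρ ≤ 1 / L)
    (x : ℕ → EuclideanSpace ℝ (Fin m))
    (y yb γ : ℕ → EuclideanSpace ℝ (Fin M))
    (S : ℕ → Prop)  -- `S k` holds iff iteration `k` is a skipping iteration
    (hγ0 : ∀ w, g (yb 0) + ⟪-γ 0, w - yb 0⟫ ≤ g w)
    (hreg : ∀ k, ¬ S k →
      (∀ (x' : EuclideanSpace ℝ (Fin m)) (y' : EuclideanSpace ℝ (Fin M)),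
        f (x (k + 1)) (y (k + 1)) + g (yb k) + ⟪γ k, yb k - y (k + 1)⟫
            + (1 / (2 * ρ)) * ‖yb k - y (k + 1)‖ ^ 2 ≤
          f x' y' + g (yb k) + ⟪γ k, yb k - y'⟫ + (1 / (2 * ρ)) * ‖yb k - y'‖ ^ 2) ∧
      f (x (k + 1)) (y (k + 1)) + g (y (k + 1)) ≤
        f (x (k + 1)) (y (k + 1)) + g (yb k) + ⟪γ k, yb k - y (k + 1)⟫
          + (1 / (2 * ρ)) * ‖yb k - y (k + 1)‖ ^ 2)
    (hskip : ∀ k, S k → y (k + 1) = yb k ∧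
      ∀ x', f (x (k + 1)) (y (k + 1)) ≤ f x' (y (k + 1)))
    (hyb : ∀ k w,
      ⟪gy (x (k + 1)) (y (k + 1)), yb (k + 1) - y (k + 1)⟫
          + (1 / (2 * ρ)) * ‖yb (k + 1) - y (k + 1)‖ ^ 2 + g (yb (k + 1)) ≤
        ⟪gy (x (k + 1)) (y (k + 1)), w - y (k + 1)⟫
          + (1 / (2 * ρ)) * ‖w - y (k + 1)‖ ^ 2 + g w)
    (hγrec : ∀ k, γ (k + 1) =
      gy (x (k + 1)) (y (k + 1)) - (1 / ρ) • (y (k + 1) - yb (k + 1)))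
    (xs : EuclideanSpace ℝ (Fin m)) (ys : EuclideanSpace ℝ (Fin M))
    (hmin : ∀ x' y', f xs ys + g ys ≤ f x' y' + g y') :
    ∀ k : ℕ, 1 ≤ k →
      (f (x k) (yb k) + g (yb k)) - (f xs ys + g ys) ≤
        ‖yb 0 - ys‖ ^ 2 /
          (2 * ρ * ((k : ℝ) + (Nat.card {n : ℕ // n < k ∧ ¬ S n} : ℝ))) := by
  classical
  have hE : True := trivial
  set Fs : ℝ := f xs ys + g ys with hFs
  set Φ : ℕ → ℝ := fun k => f (x k) (yb k) + g (yb k) with hΦ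
  set a : ℕ → ℝ := fun k => ‖yb k - ys‖ ^ 2 with ha
  -- x (k+1) minimizes f(·, y (k+1)) in every case
  have hxminall : ∀ k x', f (x (k + 1)) (y (k + 1)) ≤ f x' (y (k + 1)) := by
    intro k x'
    by_cases hSk : S k
    · exact (hskip k hSk).2 x'
    · have h := (hreg k hSk).1 x' (y (k + 1))
      linarith
  have hLρ : L / 2 ≤ 1 / (2 * ρ) := by
    rw [div_le_div_iff₀ (by norm_num) (by positivity)]
    have h1 : ρ * L ≤ 1 := by
      have := (le_div_iff₀ hL).mp hρL
      linarith
    nlinarith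
  -- main per-iteration facts about the prox step at index k+1
  have hprox : ∀ k,
      (f (x (k+1)) (yb (k+1)) + g (yb (k+1)) + 1/(2*ρ) * ‖yb (k+1) - ys‖ ^ 2 ≤
        Fs + 1/(2*ρ) * ‖y (k+1) - ys‖ ^ 2) ∧
      (f (x (k+1)) (yb (k+1)) + g (yb (k+1)) ≤ f (x (k+1)) (y (k+1)) + g (y (k+1))) ∧
      (∀ w, g (yb (k+1)) + ⟪-γ (k+1), w - yb (k+1)⟫ ≤ g w) := by
    intro k
    set x1 := x (k+1) with hx1
    set y1 := y (k+1) with hy1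
    set z := yb (k+1) with hzz
    set gk := gy x1 y1 with hgk
    have hlin : ConvexOn ℝ Set.univ (fun w : EuclideanSpace ℝ (Fin M) => ⟪gk, w - y1⟫) := by
      refine ⟨convex_univ, fun u _ v _ p q hp hq hpq => le_of_eq ?_⟩
      simp only [inner_sub_right, inner_add_right, real_inner_smul_right, smul_eq_mul]
      linear_combination (⟪gk, y1⟫ : ℝ) * hpq
    have hψconv : ConvexOn ℝ Set.univ (fun w : EuclideanSpace ℝ (Fin M) => ⟪gk, w - y1⟫ + g w) := hlin.add hg
    have hpmin : ∀ q : EuclideanSpace ℝ (Fin M),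
        (⟪gk, z - y1⟫ + g z) + 1/(2*ρ) * ‖(LinearMap.id : EuclideanSpace ℝ (Fin M) →ₗ[ℝ] EuclideanSpace ℝ (Fin M)) z - y1‖ ^ 2 ≤
        (⟪gk, q - y1⟫ + g q) + 1/(2*ρ) * ‖(LinearMap.id : EuclideanSpace ℝ (Fin M) →ₗ[ℝ] EuclideanSpace ℝ (Fin M)) q - y1‖ ^ 2 := by
      intro q
      have h := hyb k q
      simp only [LinearMap.id_coe, id_eq]
      linarith
    have SC := fun q => strong_min hψconv (LinearMap.id : EuclideanSpace ℝ (Fin M) →ₗ[ℝ] EuclideanSpace ℝ (Fin M)) y1 hρ hpmin q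
    simp only [LinearMap.id_coe, id_eq] at SC
    -- descent lemma
    have hdesc : f x1 z ≤ f x1 y1 + ⟪gk, z - y1⟫ + L / 2 * ‖z - y1‖ ^ 2 :=
      descent_lemma_s11 (hgy x1) hL.le (hLip x1) y1 z
    have hdesc' : f x1 z ≤ f x1 y1 + ⟪gk, z - y1⟫ + 1/(2*ρ) * ‖z - y1‖ ^ 2 := by
      nlinarith [sq_nonneg ‖z - y1‖, mul_le_mul_of_nonneg_right hLρ (sq_nonneg ‖z - y1‖)]
    have hFz : ∀ w, f x1 z + g z + 1/(2*ρ) * ‖w - z‖ ^ 2 ≤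
        f x1 y1 + ⟪gk, w - y1⟫ + g w + 1/(2*ρ) * ‖w - y1‖ ^ 2 := by
      intro w
      have h := SC w
      linarith
    refine ⟨?_, ?_, ?_⟩
    · -- prox progress towards optimum
      have hkm : f x1 y1 + ⟪gk, ys - y1⟫ ≤ f xs ys :=
        key_min hf hfd (hgy x1 y1) (hxminall k) xs ys
      have h := hFz ys
      have e1 : ‖ys - z‖ = ‖z - ys‖ := norm_sub_rev _ _
      have e2 : ‖ys - y1‖ = ‖y1 - ys‖ := norm_sub_rev _ _
      rw [e1, e2] at h
      simp only [hFs]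
      linarith
    · -- descent of prox step
      have h := hFz y1
      have e1 : y1 - y1 = 0 := sub_self _
      rw [e1] at h
      simp only [inner_zero_right, norm_zero] at h
      nlinarith [sq_nonneg ‖y1 - z‖]
    · -- subgradient property for γ (k+1)
      intro w
      have h := SC w
      have hid2 : ‖w - y1‖ ^ 2 = ‖w - z‖ ^ 2 + 2 * ⟪w - z, z - y1⟫ + ‖z - y1‖ ^ 2 := by
        have e : w - y1 = (w - z) + (z - y1) := by abel
        rw [e, @norm_add_sq_real]
      have hinner1 : ⟪gk, w - y1⟫ = ⟪gk, w - z⟫ + ⟪gk, z - y1⟫ := by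
        rw [← inner_add_right]
        congr 1
        abel
      have hγx : ⟪-γ (k+1), w - z⟫ = -⟪gk, w - z⟫ + (1/ρ) * ⟪y1 - z, w - z⟫ := by
        rw [hγrec k]
        simp only [← hx1, ← hy1, ← hzz, ← hgk]
        rw [neg_sub, inner_sub_left, real_inner_smul_left]
        ring
      have hsym : ⟪y1 - z, w - z⟫ = -⟪w - z, z - y1⟫ := by
        rw [real_inner_comm, show (y1 - z : EuclideanSpace ℝ (Fin M)) = -(z - y1) by abel, inner_neg_right]
      have h2c : (1/ρ) * ⟪y1 - z, w - z⟫ = -(2 * (1/(2*ρ) * ⟪w - z, z - y1⟫)) := by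
        rw [hsym]
        ring
      have hidc : 1/(2*ρ) * ‖w - y1‖ ^ 2 = 1/(2*ρ) * ‖w - z‖ ^ 2 +
          2 * (1/(2*ρ) * ⟪w - z, z - y1⟫) + 1/(2*ρ) * ‖z - y1‖ ^ 2 := by
        rw [hid2]; ring
      rw [hinner1, hidc] at h
      rw [hγx, h2c]
      linarith
  -- subgradient property at every index
  have hsub : ∀ k w, g (yb k) + ⟪-γ k, w - yb k⟫ ≤ g w := by
    intro k
    cases k with
    | zero => exact hγ0
    | succ n => exact (hprox n).2.2
  -- regular step inequality
  have hregstep : ∀ k, ¬ S k →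
      f (x (k+1)) (y (k+1)) + g (y (k+1)) + 1/(2*ρ) * ‖y (k+1) - ys‖ ^ 2 ≤
        Fs + 1/(2*ρ) * ‖yb k - ys‖ ^ 2 := by
    intro k hS
    set x1 := x (k+1) with hx1
    set y1 := y (k+1) with hy1
    set bk := yb k with hbk
    have hlin2 : ConvexOn ℝ Set.univ (fun q : EuclideanSpace ℝ (Fin m) × EuclideanSpace ℝ (Fin M) => ⟪γ k, bk - q.2⟫) := by
      refine ⟨convex_univ, fun u _ v _ p q hp hq hpq => le_of_eq ?_⟩
      simp only [Prod.snd_add, Prod.smul_snd, inner_sub_right, inner_add_right,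
        real_inner_smul_right, smul_eq_mul]
      linear_combination (-⟪γ k, bk⟫ : ℝ) * hpq
    have hψconv : ConvexOn ℝ Set.univ
        (fun q : EuclideanSpace ℝ (Fin m) × EuclideanSpace ℝ (Fin M) => f q.1 q.2 + ⟪γ k, bk - q.2⟫) := hf.add hlin2
    have hpmin : ∀ q : EuclideanSpace ℝ (Fin m) × EuclideanSpace ℝ (Fin M),
        (f x1 y1 + ⟪γ k, bk - y1⟫) +
          1/(2*ρ) * ‖(LinearMap.snd ℝ (EuclideanSpace ℝ (Fin m)) (EuclideanSpace ℝ (Fin M))) (x1, y1) - bk‖ ^ 2 ≤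
        (f q.1 q.2 + ⟪γ k, bk - q.2⟫) +
          1/(2*ρ) * ‖(LinearMap.snd ℝ (EuclideanSpace ℝ (Fin m)) (EuclideanSpace ℝ (Fin M))) q - bk‖ ^ 2 := by
      intro q
      have h := (hreg k hS).1 q.1 q.2
      have e1 : ‖bk - y1‖ = ‖y1 - bk‖ := norm_sub_rev _ _
      have e2 : ‖bk - q.2‖ = ‖q.2 - bk‖ := norm_sub_rev _ _
      simp only [LinearMap.snd_apply]
      rw [← hx1, ← hy1, ← hbk] at h
      rw [e1, e2] at h
      linarith
    have SC := strong_min (p := (x1, y1)) hψconv (LinearMap.snd ℝ (EuclideanSpace ℝ (Fin m)) (EuclideanSpace ℝ (Fin M))) bk hρ hpmin (xs, ys)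
    simp only [LinearMap.snd_apply] at SC
    have hd2 := (hreg k hS).2
    rw [← hx1, ← hy1, ← hbk] at hd2
    have hsubs := hsub k ys
    have einner : ⟪-γ k, ys - bk⟫ = ⟪γ k, bk - ys⟫ := by
      rw [inner_neg_left, ← inner_neg_right, neg_sub]
    rw [← hbk, einner] at hsubs
    have e1 : ‖bk - y1‖ = ‖y1 - bk‖ := norm_sub_rev _ _
    have e2 : ‖ys - y1‖ = ‖y1 - ys‖ := norm_sub_rev _ _
    have e3 : ‖ys - bk‖ = ‖bk - ys‖ := norm_sub_rev _ _
    rw [e2, e3] at SC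
    rw [e1] at hd2
    simp only [hFs]
    linarith
  -- weights
  set W : ℕ → ℝ := fun k => if S k then 1 else 2 with hW
  have hWpos : ∀ k, 0 < W k := by
    intro k
    simp only [hW]
    split <;> norm_num
  have hstepk : ∀ k, 2 * ρ * W k * (Φ (k+1) - Fs) ≤ a k - a (k+1) := by
    intro k
    have hp1 := (hprox k).1
    have hinv : ∀ r : ℝ, 2 * ρ * (1/(2*ρ) * r) = r := by
      intro r
      field_simp
    set A := ‖yb (k+1) - ys‖ ^ 2 with hA
    set B := ‖yb k - ys‖ ^ 2 with hB
    set P := f (x (k+1)) (yb (k+1)) + g (yb (k+1)) with hP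
    have hBA := hinv (B - A)
    by_cases hSk : S k
    · have hyk : y (k+1) = yb k := (hskip k hSk).1
      rw [hyk] at hp1
      rw [← hB] at hp1
      have hstep1 : P - Fs ≤ 1/(2*ρ) * (B - A) := by
        have : 1/(2*ρ) * (B - A) = 1/(2*ρ) * B - 1/(2*ρ) * A := by ring
        rw [this]
        linarith
      have hmul := mul_le_mul_of_nonneg_left hstep1 (by positivity : (0:ℝ) ≤ 2 * ρ)
      have hΦk : Φ (k+1) = P := rfl
      have hak : a k = B := rfl
      have hak1 : a (k+1) = A := rfl
      have hWk : W k = 1 := by simp [hW, hSk]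
      rw [hΦk, hak, hak1, hWk]
      calc 2 * ρ * 1 * (P - Fs) = 2 * ρ * (P - Fs) := by ring
        _ ≤ 2 * ρ * (1/(2*ρ) * (B - A)) := hmul
        _ = B - A := hBA
    · have hrs := hregstep k hSk
      have hp2 := (hprox k).2.1
      rw [← hB] at hrs
      rw [← hP] at hp2
      have hstep1 : 2 * (P - Fs) ≤ 1/(2*ρ) * (B - A) := by
        have : 1/(2*ρ) * (B - A) = 1/(2*ρ) * B - 1/(2*ρ) * A := by ring
        rw [this]
        linarith
      have hmul := mul_le_mul_of_nonneg_left hstep1 (by positivity : (0:ℝ) ≤ 2 * ρ)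
      have hΦk : Φ (k+1) = P := rfl
      have hak : a k = B := rfl
      have hak1 : a (k+1) = A := rfl
      have hWk : W k = 2 := by simp [hW, hSk]
      rw [hΦk, hak, hak1, hWk]
      calc 2 * ρ * 2 * (P - Fs) = 2 * ρ * (2 * (P - Fs)) := by ring
        _ ≤ 2 * ρ * (1/(2*ρ) * (B - A)) := hmul
        _ = B - A := hBA
  -- monotonicity
  have hmono : ∀ k, Φ (k+2) ≤ Φ (k+1) := by
    intro k
    have hd := (hprox (k+1)).2.1
    by_cases hSk : S (k+1)
    · have hyk : y (k+2) = yb (k+1) := (hskip (k+1) hSk).1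
      have hxm := hxminall (k+1) (x (k+1))
      rw [hyk] at hxm hd
      simp only [hΦ]
      linarith
    · have h1 := (hreg (k+1) hSk).1 (x (k+1)) (yb (k+1))
      have h2 := (hreg (k+1) hSk).2
      rw [sub_self] at h1
      rw [inner_zero_right, norm_zero] at h1
      simp only [hΦ]
      have : (0:ℝ) ≤ 1/(2*ρ) * ‖yb (k+1) - y (k+2)‖ ^ 2 := by positivity
      nlinarith [h1, h2, hd]
  have hmono' : ∀ i j, 1 ≤ i → i ≤ j → Φ j ≤ Φ i := by
    intro i j hi hij
    induction j with
    | zero => omega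
    | succ n ih =>
      rcases Nat.lt_or_ge i (n+1) with h | h
      · have hn : i ≤ n := by omega
        have h1 := ih hn
        have h2 : Φ (n+1) ≤ Φ n := by
          obtain ⟨n', rfl⟩ : ∃ n', n = n' + 1 := ⟨n - 1, by omega⟩
          exact hmono n'
        linarith
      · have : i = n+1 := by omega
        rw [this]
  -- conclusion
  intro k hk
  have htel : ∑ j ∈ Finset.range k, (2 * ρ * W j * (Φ (j+1) - Fs)) ≤ a 0 - a k := by
    calc ∑ j ∈ Finset.range k, (2 * ρ * W j * (Φ (j+1) - Fs))
        ≤ ∑ j ∈ Finset.range k, (a j - a (j+1)) :=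
          Finset.sum_le_sum (fun j _ => hstepk j)
      _ = a 0 - a k := Finset.sum_range_sub' a k
  have hterm : ∀ j ∈ Finset.range k, 2 * ρ * W j * (Φ k - Fs) ≤ 2 * ρ * W j * (Φ (j+1) - Fs) := by
    intro j hj
    have hjk : j + 1 ≤ k := Finset.mem_range.mp hj
    have := hmono' (j+1) k (by omega) hjk
    have hc : (0:ℝ) ≤ 2 * ρ * W j := by positivity
    nlinarith [hWpos j]
  have hsum2 : (2 * ρ * (Φ k - Fs)) * ∑ j ∈ Finset.range k, W j ≤ a 0 := by
    have h1 : ∑ j ∈ Finset.range k, (2 * ρ * W j * (Φ k - Fs)) ≤ a 0 - a k :=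
      le_trans (Finset.sum_le_sum hterm) htel
    have h2 : (0:ℝ) ≤ a k := by simp only [ha]; positivity
    have h3 : ∑ j ∈ Finset.range k, (2 * ρ * W j * (Φ k - Fs)) =
        (2 * ρ * (Φ k - Fs)) * ∑ j ∈ Finset.range k, W j := by
      rw [Finset.mul_sum]
      congr 1
      funext j
      ring
    linarith [h3 ▸ h1]
  have hcard : (Nat.card {n : ℕ // n < k ∧ ¬ S n} : ℝ) =
      (((Finset.range k).filter (fun n => ¬ S n)).card : ℝ) := by
    congr 1
    have hseteq : {n : ℕ | n < k ∧ ¬ S n} =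
        ↑((Finset.range k).filter (fun n => ¬ S n)) := by
      ext n
      simp [Finset.mem_filter, Finset.mem_range]
    calc Nat.card {n : ℕ // n < k ∧ ¬ S n}
        = Set.ncard {n : ℕ | n < k ∧ ¬ S n} := Nat.card_coe_set_eq _
      _ = ((Finset.range k).filter (fun n => ¬ S n)).card := by
          rw [hseteq, Set.ncard_coe_finset]
  have hWsum : ∑ j ∈ Finset.range k, W j =
      (k : ℝ) + (Nat.card {n : ℕ // n < k ∧ ¬ S n} : ℝ) := by
    have hWj : ∀ j, W j = 1 + (if ¬ S j then (1:ℝ) else 0) := by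
      intro j
      simp only [hW]
      by_cases h : S j <;> simp [h] <;> norm_num
    calc ∑ j ∈ Finset.range k, W j
        = ∑ j ∈ Finset.range k, (1 + (if ¬ S j then (1:ℝ) else 0)) := by
          exact Finset.sum_congr rfl (fun j _ => hWj j)
      _ = (k : ℝ) + ∑ j ∈ Finset.range k, (if ¬ S j then (1:ℝ) else 0) := by
          rw [Finset.sum_add_distrib]
          simp
      _ = (k : ℝ) + (((Finset.range k).filter (fun n => ¬ S n)).card : ℝ) := by
          rw [Finset.sum_boole]
      _ = (k : ℝ) + (Nat.card {n : ℕ // n < k ∧ ¬ S n} : ℝ) := by rw [hcard]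
  rw [hWsum] at hsum2
  have hkn : (0:ℝ) ≤ (Nat.card {n : ℕ // n < k ∧ ¬ S n} : ℝ) := Nat.cast_nonneg _
  have hkpos : (1:ℝ) ≤ (k : ℝ) := by exact_mod_cast hk
  have hden : (0:ℝ) < 2 * ρ * ((k : ℝ) + (Nat.card {n : ℕ // n < k ∧ ¬ S n} : ℝ)) := by
    nlinarith
  rw [le_div_iff₀ hden]
  have e1 : Φ k = f (x k) (yb k) + g (yb k) := rfl
  have e2 : a 0 = ‖yb 0 - ys‖ ^ 2 := rfl
  rw [← e1, ← e2]
  linarith [hsum2]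
end
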